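/- arXiv:1307.0371 — 4 statements merged into one kernel-verified Lean document; each statement's English description precedes it below -/
import Mathlib

section
/- Fix a real number q > 1 and an integer n ≥ 1. Let φ_1, …, φ_N : ℚ^n → ℚ be pairwise distinct linear functionals and let f_1, …, f_N ∈ ℚ[x_1,…,x_n] be nonzero polynomials. Then the functions x ↦ f_i(x)·q^{φ_i(x)}, viewed as functions from ℤ_{≥0}^n to ℝ, are linearly independent over ℝ: if α_1, …, α_N ∈ ℝ satisfy Σ_{i=1}^N α_i f_i(x) q^{φ_i(x)} = 0 for all x ∈ ℤ_{≥0}^n, then α_1 = ⋯ = α_N = 0. -/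
open Polynomial in
lemma exists_nat_eval_ne_zero {K : Type*} [Field K] [CharZero K]
    (p : K[X]) (hp : p ≠ 0) : ∃ t : ℕ, p.eval (t : K) ≠ 0 := by
  by_contra hc
  push_neg at hc
  apply hp
  apply Polynomial.eq_zero_of_infinite_isRoot
  apply Set.Infinite.mono (s := Set.range ((↑) : ℕ → K))
  · rintro _ ⟨t, rfl⟩; exact hc t
  · exact Set.infinite_range_of_injective Nat.cast_injective

lemma mv_exists (n : ℕ) (F : MvPolynomial (Fin n) ℚ) (hF : F ≠ 0) :
    ∃ x : Fin n → ℕ, MvPolynomial.eval (fun j => (x j : ℚ)) F ≠ 0 := by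
  induction n with
  | zero =>
    obtain ⟨c, rfl⟩ := MvPolynomial.C_surjective (Fin 0) F
    refine ⟨fun j => 0, ?_⟩
    simpa [MvPolynomial.eval_C] using fun h => hF (by rw [h, map_zero])
  | succ n ih =>
    set Q := MvPolynomial.finSuccEquiv ℚ n F with hQdef
    have hQ : Q ≠ 0 := by
      simpa [hQdef] using hF
    have hlc : Q.leadingCoeff ≠ 0 := Polynomial.leadingCoeff_ne_zero.mpr hQ
    obtain ⟨x', hx'⟩ := ih Q.leadingCoeff hlc
    set ev := MvPolynomial.eval (fun j => (x' j : ℚ))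
    set p : Polynomial ℚ := Q.map ev with hpdef
    have hp : p ≠ 0 := by
      intro h0
      apply hx'
      have : p.coeff Q.natDegree = 0 := by rw [h0]; simp
      rwa [hpdef, Polynomial.coeff_map] at this
    obtain ⟨t, ht⟩ := exists_nat_eval_ne_zero p hp
    refine ⟨Fin.cons t x', ?_⟩
    have hcast : (fun j => ((Fin.cons t x' : Fin (n+1) → ℕ) j : ℚ))
        = Fin.cons (t : ℚ) (fun j => (x' j : ℚ)) := by
      funext j
      refine Fin.cases ?_ ?_ j <;> simp
    rw [hcast, MvPolynomial.eval_eq_eval_mv_eval']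
    exact ht

open Polynomial in
lemma oneD {N : ℕ} (Q : Fin N → ℝ) (hQ0 : ∀ i, 0 < Q i) (hQinj : Function.Injective Q)
    (β : Fin N → ℝ) :
    ∀ (μ : ℕ) (s : Finset (Fin N)) (g : Fin N → ℝ[X]),
      (∑ i ∈ s, ((g i).natDegree + 1)) ≤ μ →
      (∀ i ∈ s, g i ≠ 0) →
      (∀ t : ℕ, ∑ i ∈ s, β i * (g i).eval (t : ℝ) * Q i ^ t = 0) →
      ∀ i ∈ s, β i = 0 := by
  intro μ
  induction μ with
  | zero =>
    intro s g hμ hg hrel i0 hi0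
    have := Finset.single_le_sum (f := fun i => (g i).natDegree + 1)
      (fun i _ => Nat.zero_le _) hi0
    have h2 := this.trans hμ
    simp at h2
  | succ μ ih =>
    intro s g hμ hg hrel i0 hi0
    set h : Fin N → ℝ[X] := fun i => Q i • ((g i).comp (X + 1)) - Q i0 • (g i) with hhdef
    -- the new relation
    have hrel' : ∀ t : ℕ, ∑ i ∈ s, β i * (h i).eval (t : ℝ) * Q i ^ t = 0 := by
      intro t
      have e : ∀ i ∈ s, β i * (h i).eval (t : ℝ) * Q i ^ t
          = β i * (g i).eval ((t+1 : ℕ) : ℝ) * Q i ^ (t+1)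
            - Q i0 * (β i * (g i).eval (t : ℝ) * Q i ^ t) := by
        intro i hi
        simp only [hhdef, eval_sub, eval_smul, eval_comp, eval_add, eval_X, eval_one,
          smul_eq_mul, pow_succ]
        push_cast
        ring
      rw [Finset.sum_congr rfl e, Finset.sum_sub_distrib, ← Finset.mul_sum, hrel, hrel]
      ring
    -- degree facts for i ≠ i0
    have hX1 : (X + (1:ℝ[X])).natDegree = 1 := by
      simpa using natDegree_X_add_C (1:ℝ)
    have hX2 : (X + (1:ℝ[X])).leadingCoeff = 1 := by
      simpa using (monic_X_add_C (1:ℝ)).leadingCoeff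
    have hcomp_deg : ∀ i, ((g i).comp (X + 1)).natDegree = (g i).natDegree := by
      intro i
      rw [natDegree_comp, hX1, mul_one]
    have hcomp_coeff : ∀ i, g i ≠ 0 →
        ((g i).comp (X + 1)).coeff (g i).natDegree = (g i).leadingCoeff := by
      intro i hgi
      have h1 : ((g i).comp (X + 1)).coeff (g i).natDegree
          = ((g i).comp (X + 1)).leadingCoeff := by
        rw [leadingCoeff, hcomp_deg]
      rw [h1, leadingCoeff_comp (by rw [hX1]; norm_num), hX2, one_pow, mul_one]
    have hdegle : ∀ i, (h i).natDegree ≤ (g i).natDegree := by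
      intro i
      refine natDegree_sub_le _ _ |>.trans ?_
      simp only [max_le_iff]
      constructor
      · exact (natDegree_smul_le _ _).trans (le_of_eq (hcomp_deg i))
      · exact natDegree_smul_le _ _
    have hcoeff : ∀ i, g i ≠ 0 →
        (h i).coeff (g i).natDegree = (Q i - Q i0) * (g i).leadingCoeff := by
      intro i hgi
      simp only [hhdef, coeff_sub, coeff_smul, smul_eq_mul, hcomp_coeff i hgi]
      rw [← leadingCoeff]
      ring
    have hne : ∀ i ∈ s, i ≠ i0 → h i ≠ 0 ∧ (h i).natDegree = (g i).natDegree := by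
      intro i hi hine
      have hc : (h i).coeff (g i).natDegree ≠ 0 := by
        rw [hcoeff i (hg i hi)]
        exact mul_ne_zero (sub_ne_zero_of_ne (fun e => hine (hQinj e)))
          (leadingCoeff_ne_zero.mpr (hg i hi))
      exact ⟨fun h0 => hc (by rw [h0]; simp),
        le_antisymm (hdegle i) (le_natDegree_of_ne_zero hc)⟩
    by_cases hA : h i0 = 0
    · -- drop i0
      have hrel2 : ∀ t : ℕ, ∑ i ∈ s.erase i0, β i * (h i).eval (t : ℝ) * Q i ^ t = 0 := by
        intro t
        have := hrel' t
        rwa [← Finset.add_sum_erase _ _ hi0, hA, eval_zero, mul_zero, zero_mul, zero_add] at this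
      have hβ : ∀ i ∈ s.erase i0, β i = 0 := by
        refine ih (s.erase i0) h ?_ (fun i hi => (hne i (Finset.mem_of_mem_erase hi)
          (Finset.ne_of_mem_erase hi)).1) hrel2
        calc ∑ i ∈ s.erase i0, ((h i).natDegree + 1)
            ≤ ∑ i ∈ s.erase i0, ((g i).natDegree + 1) :=
              Finset.sum_le_sum (fun i _ => by simp [hdegle i])
          _ ≤ ∑ i ∈ s, ((g i).natDegree + 1) - ((g i0).natDegree + 1) := by
              rw [← Finset.add_sum_erase _ _ hi0]; omega
          _ ≤ μ := by omega
      -- now recover β i0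
      obtain ⟨t, ht⟩ := exists_nat_eval_ne_zero (g i0) (hg i0 hi0)
      have := hrel t
      rw [Finset.sum_eq_single_of_mem i0 hi0
        (fun b hb hbne => by rw [hβ b (Finset.mem_erase.mpr ⟨hbne, hb⟩)]; ring)] at this
      have hQt : (0:ℝ) < Q i0 ^ t := pow_pos (hQ0 i0) t
      rcases mul_eq_zero.mp this with h2 | h2
      · rcases mul_eq_zero.mp h2 with h3 | h3
        · exact h3
        · exact absurd h3 ht
      · exact absurd h2 hQt.ne'
    · -- degree of h i0 drops
      have hdlt : (h i0).natDegree < (g i0).natDegree := by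
        have hc0 : (h i0).coeff (g i0).natDegree = 0 := by
          rw [hcoeff i0 (hg i0 hi0)]; ring
        rcases lt_or_eq_of_le (hdegle i0) with h1 | h1
        · exact h1
        · exact absurd (leadingCoeff_eq_zero.mp (by rw [leadingCoeff, h1]; exact hc0)) hA
      have hβ : ∀ i ∈ s, β i = 0 := by
        refine ih s h ?_ (fun i hi => ?_) hrel'
        · have h2 : ∑ i ∈ s, ((h i).natDegree + 1) < ∑ i ∈ s, ((g i).natDegree + 1) :=
            Finset.sum_lt_sum (fun i hi => by simp [hdegle i]) ⟨i0, hi0, by omega⟩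
          exact Nat.lt_succ_iff.mp (h2.trans_le hμ)
        · by_cases hii : i = i0
          · rwa [hii]
          · exact (hne i hi hii).1
      exact hβ i0 hi0

noncomputable def Lphi {n N : ℕ} (ψ : (Fin n → ℚ) →ₗ[ℚ] ℚ) : MvPolynomial (Fin n) ℚ :=
  ∑ k, MvPolynomial.C (ψ fun j => if k = j then 1 else 0) * MvPolynomial.X k

lemma eval_Lphi {n N : ℕ} (ψ : (Fin n → ℚ) →ₗ[ℚ] ℚ) (x : Fin n → ℚ) :
    MvPolynomial.eval x (Lphi (N := N) ψ) = ψ x := by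
  rw [LinearMap.pi_apply_eq_sum_univ ψ x, Lphi, map_sum]
  refine Finset.sum_congr rfl (fun k _ => ?_)
  simp [mul_comm]

lemma Lphi_ne_zero {n N : ℕ} (ψ : (Fin n → ℚ) →ₗ[ℚ] ℚ) (hψ : ψ ≠ 0) :
    Lphi (N := N) ψ ≠ 0 := by
  intro h0
  apply hψ
  refine LinearMap.ext fun x => ?_
  have := eval_Lphi (N := N) ψ x
  rw [h0, map_zero] at this
  simpa using this.symm

/-- Linear independence of the functions `x ↦ f_i(x)·q^{φ_i(x)}` on `ℤ_{≥0}^n`, for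
pairwise distinct linear functionals `φ_i : ℚ^n → ℚ` and nonzero polynomials
`f_i ∈ ℚ[x_1,…,x_n]`, where `q > 1` is a fixed real number. -/
theorem vfunction_linear_independence (q : ℝ) (hq : 1 < q) (n N : ℕ) (hn : 1 ≤ n)
    (φ : Fin N → ((Fin n → ℚ) →ₗ[ℚ] ℚ)) (hφ : Function.Injective φ)
    (f : Fin N → MvPolynomial (Fin n) ℚ) (hf : ∀ i, f i ≠ 0)
    (α : Fin N → ℝ)
    (h : ∀ x : Fin n → ℕ,
      ∑ i : Fin N, α i * ((MvPolynomial.eval (fun j => (x j : ℚ)) (f i) : ℚ) : ℝ) *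
        q ^ (((φ i) (fun j => (x j : ℚ)) : ℚ) : ℝ) = 0) :
    ∀ i, α i = 0 := by
  classical
  have hq0 : (0:ℝ) < q := lt_trans one_pos hq
  -- the master polynomial
  set G : MvPolynomial (Fin n) ℚ :=
    (∏ i, f i) * ∏ p ∈ Finset.univ.offDiag, Lphi (N := N) (φ p.1 - φ p.2) with hGdef
  have hG : G ≠ 0 := by
    apply mul_ne_zero
    · exact Finset.prod_ne_zero_iff.mpr (fun i _ => hf i)
    · refine Finset.prod_ne_zero_iff.mpr (fun p hp => ?_)
      refine Lphi_ne_zero _ (sub_ne_zero_of_ne ?_)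
      exact fun e => (Finset.mem_offDiag.mp hp).2.2 (hφ e)
  obtain ⟨w, hw⟩ := mv_exists n G hG
  set wq : Fin n → ℚ := fun j => (w j : ℚ) with hwq
  rw [hGdef, map_mul, map_prod, map_prod] at hw
  have hfw : ∀ i, MvPolynomial.eval wq (f i) ≠ 0 := by
    intro i hz
    apply hw
    apply mul_eq_zero_of_left
    exact Finset.prod_eq_zero (Finset.mem_univ i) hz
  set c : Fin N → ℚ := fun i => φ i wq with hc
  have hcinj : Function.Injective c := by
    intro i j hij
    by_contra hne
    apply hw
    apply mul_eq_zero_of_right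
    refine Finset.prod_eq_zero (i := (i, j))
      (Finset.mem_offDiag.mpr ⟨Finset.mem_univ _, Finset.mem_univ _, hne⟩) ?_
    rw [eval_Lphi]
    simp only [LinearMap.sub_apply]
    have e1 : φ i wq = φ j wq := hij
    rw [e1, sub_self]
  set Q : Fin N → ℝ := fun i => q ^ ((c i : ℚ) : ℝ) with hQ
  have hQpos : ∀ i, 0 < Q i := fun i => Real.rpow_pos_of_pos hq0 _
  have hQinj : Function.Injective Q := by
    intro i j hij
    apply hcinj
    have : ((c i : ℚ) : ℝ) = ((c j : ℚ) : ℝ) := by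
      by_contra hne
      rcases lt_or_gt_of_ne hne with h1 | h1
      · exact absurd hij (ne_of_lt ((Real.rpow_lt_rpow_left_iff hq).mpr h1))
      · exact absurd hij.symm (ne_of_lt ((Real.rpow_lt_rpow_left_iff hq).mpr h1))
    exact_mod_cast this
  -- the univariate polynomials
  set g : Fin N → Polynomial ℝ := fun i =>
    Polynomial.map (algebraMap ℚ ℝ)
      ((MvPolynomial.aeval (fun j => (wq j) • (Polynomial.X + 1))) (f i)) with hg
  have hgeval : ∀ i (t : ℕ), (g i).eval ((t:ℕ) : ℝ)
      = ((MvPolynomial.eval (fun j => wq j * ((t:ℚ) + 1)) (f i) : ℚ) : ℝ) := by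
    intro i t
    have h1 : Polynomial.eval ((t:ℕ):ℚ) ((MvPolynomial.aeval
        (fun j => (wq j) • (Polynomial.X + 1))) (f i))
        = MvPolynomial.eval (fun j => wq j * ((t:ℚ) + 1)) (f i) := by
      rw [← Polynomial.coe_aeval_eq_eval, ← AlgHom.comp_apply, MvPolynomial.comp_aeval,
        MvPolynomial.aeval_def, Algebra.algebraMap_self, MvPolynomial.eval₂_id]
      have hF : (fun j => (Polynomial.aeval ((t:ℕ):ℚ)) ((wq j) • (Polynomial.X + 1 : Polynomial ℚ)))
          = (fun j => wq j * ((t:ℚ) + 1)) := by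
        funext j
        push_cast
        simp [smul_eq_mul]
        ring
      rw [hF]
    rw [hg, show ((t:ℕ):ℝ) = algebraMap ℚ ℝ ((t:ℕ):ℚ) by simp, Polynomial.eval_map,
      Polynomial.eval₂_at_apply, h1, eq_ratCast (algebraMap ℚ ℝ)]
  have hgne : ∀ i, g i ≠ 0 := by
    intro i h0
    apply hfw i
    have h1 := hgeval i 0
    have e2 : (fun j => wq j * (((0:ℕ):ℚ) + 1)) = wq := by funext j; norm_num
    rw [h0, e2] at h1
    simp at h1
    exact_mod_cast h1.symm
  set β : Fin N → ℝ := fun i => α i * Q i with hβ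
  have hφt : ∀ (t : ℕ) (i : Fin N), φ i (fun j => wq j * ((t:ℚ)+1)) = ((t:ℚ)+1) * c i := by
    intro t i
    have e : (fun j => wq j * ((t:ℚ)+1)) = ((t:ℚ)+1) • wq := by
      funext j; simp [smul_eq_mul, mul_comm]
    rw [e, map_smul, smul_eq_mul, hc]
  have hrel : ∀ t : ℕ, ∑ i, β i * (g i).eval ((t:ℕ):ℝ) * Q i ^ t = 0 := by
    intro t
    have hx := h (fun j => (t+1) * w j)
    rw [← hx]
    refine Finset.sum_congr rfl fun i _ => ?_
    have harg : (fun j => ((((t+1) * w j : ℕ)) : ℚ)) = fun j => wq j * ((t:ℚ)+1) := by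
      funext j; push_cast; ring
    rw [harg, ← hgeval i t, hφt t i]
    have hq2 : q ^ (((((t:ℚ)+1) * c i : ℚ)):ℝ) = Q i ^ t * Q i := by
      push_cast
      rw [show ((t:ℝ)+1) * ((c i : ℚ):ℝ) = ((c i : ℚ):ℝ) * (((t+1:ℕ):ℕ):ℝ) by push_cast; ring,
        Real.rpow_mul hq0.le, Real.rpow_natCast, pow_succ, hQ]
    rw [hq2, hβ]
    ring
  have hβ0 := oneD Q hQpos hQinj β (∑ i, ((g i).natDegree + 1)) Finset.univ g
    le_rfl (fun i _ => hgne i) hrel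
  intro i
  have hi := hβ0 i (Finset.mem_univ i)
  rw [hβ] at hi
  rcases mul_eq_zero.mp hi with h1 | h1
  · exact h1
  · exact absurd h1 (hQpos i).ne'
end

section
/- Fix a real number q > 1 and an integer n ≥ 1. Let R(x) = Σ_{i=1}^N α_i f_i(x) q^{φ_i(x)} be a function on ℤ_{≥0}^n, where α_1, …, α_N ∈ ℂ are nonzero, f_1, …, f_N ∈ ℚ[x_1,…,x_n] are nonzero polynomials, and φ_1, …, φ_N : ℚ^n → ℚ are pairwise distinct linear functionals. Then the following are equivalent: (a) there are no p, v ∈ ℤ_{≥0}^n such that |R(p + m·v)| → ∞ as m → ∞; (b) for every e ∈ ℤ_{≥0}^n and every i one has φ_i(e) ≤ 0, and moreover if φ_i(e) = 0 then the directional derivative Σ_{j=1}^n e_j · ∂f_i/∂x_j is the zero polynomial. -/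
open Filter Polynomial
open scoped Topology

namespace VP

variable {n : ℕ}

noncomputable def dder (e : Fin n → ℕ) (g : MvPolynomial (Fin n) ℚ) : MvPolynomial (Fin n) ℚ :=
  ∑ j : Fin n, MvPolynomial.C (e j : ℚ) * MvPolynomial.pderiv j g

noncomputable def rayP (x e : Fin n → ℕ) (g : MvPolynomial (Fin n) ℚ) : Polynomial ℚ :=
  MvPolynomial.aeval (fun j => Polynomial.C (x j : ℚ) + Polynomial.C (e j : ℚ) * Polynomial.X) g

lemma rayP_eval (x e : Fin n → ℕ) (g : MvPolynomial (Fin n) ℚ) (m : ℚ) :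
    (rayP x e g).eval m = MvPolynomial.eval (fun j => (x j : ℚ) + m * e j) g := by
  have h : (Polynomial.aeval (R := ℚ) m).comp
      (MvPolynomial.aeval (R := ℚ) (fun j => Polynomial.C (x j : ℚ) + Polynomial.C (e j : ℚ) * Polynomial.X))
      = MvPolynomial.aeval (fun j => (x j : ℚ) + m * e j) := by
    apply MvPolynomial.algHom_ext
    intro j
    simp [mul_comm]
  have h2 := congrArg (fun F => F g) h
  simp only [AlgHom.comp_apply] at h2
  have e1 : Polynomial.aeval (R := ℚ) m (rayP x e g) = (rayP x e g).eval m := by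
    exact congrFun (Polynomial.coe_aeval_eq_eval m) _
  have e2 : MvPolynomial.aeval (fun j => (x j : ℚ) + m * e j) g
      = MvPolynomial.eval (fun j => (x j : ℚ) + m * e j) g := rfl
  rw [← e1, ← e2]; exact h2


lemma dder_add (e : Fin n → ℕ) (p q : MvPolynomial (Fin n) ℚ) :
    dder e (p + q) = dder e p + dder e q := by
  simp [dder, mul_add, Finset.sum_add_distrib]

lemma dder_C (e : Fin n → ℕ) (a : ℚ) : dder e (MvPolynomial.C a) = 0 := by
  simp [dder]

lemma dder_mul_X (e : Fin n → ℕ) (p : MvPolynomial (Fin n) ℚ) (j : Fin n) :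
    dder e (p * MvPolynomial.X j)
      = dder e p * MvPolynomial.X j + MvPolynomial.C (e j : ℚ) * p := by
  classical
  simp only [dder, MvPolynomial.pderiv_mul, MvPolynomial.pderiv_X, mul_add, Finset.sum_add_distrib,
    Finset.sum_mul]
  congr 1
  · rw [Finset.sum_congr rfl]
    intro k _
    ring
  · rw [Finset.sum_eq_single j]
    · simp [Pi.single_apply, mul_comm]
    · intro k _ hk
      simp [Pi.single_apply, hk]
    · simp

lemma rayP_derivative (x e : Fin n → ℕ) (g : MvPolynomial (Fin n) ℚ) :
    (rayP x e g).derivative = rayP x e (dder e g) := by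
  induction g using MvPolynomial.induction_on with
  | C a =>
      simp [rayP, dder_C]
  | add p q hp hq =>
      simp only [rayP, map_add, derivative_add, dder_add] at *
      rw [hp, hq]
  | mul_X p j hp =>
      rw [dder_mul_X]
      simp only [rayP, map_add, map_mul, MvPolynomial.aeval_X, MvPolynomial.aeval_C] at *
      rw [derivative_mul, hp]
      simp only [derivative_add, derivative_C, derivative_mul, derivative_X, zero_add, mul_one,
        Polynomial.aeval_def]
      norm_num [mul_comm]


noncomputable def rayC (x e : Fin n → ℕ) (g : MvPolynomial (Fin n) ℚ) : Polynomial ℂ :=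
  (rayP x e g).map (algebraMap ℚ ℂ)

lemma rayC_eval (x e : Fin n → ℕ) (g : MvPolynomial (Fin n) ℚ) (m : ℕ) :
    (rayC x e g).eval (m : ℂ) = ((MvPolynomial.eval (fun j => (x j : ℚ) + m * e j) g : ℚ) : ℂ) := by
  rw [rayC, Polynomial.eval_map, Polynomial.eval₂_at_natCast, ← rayP_eval]
  norm_num

lemma rayC_eval_zero (x e : Fin n → ℕ) (g : MvPolynomial (Fin n) ℚ) :
    (rayC x e g).eval (0 : ℂ) = ((MvPolynomial.eval (fun j => (x j : ℚ)) g : ℚ) : ℂ) := by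
  have := rayC_eval x e g 0
  norm_num at this
  simpa using this

lemma rayC_derivative (x e : Fin n → ℕ) (g : MvPolynomial (Fin n) ℚ) :
    (rayC x e g).derivative = rayC x e (dder e g) := by
  rw [rayC, rayC, Polynomial.derivative_map, rayP_derivative]

/-- constancy along a ray when the directional derivative vanishes -/
lemma eval_ray_const (x e : Fin n → ℕ) (g : MvPolynomial (Fin n) ℚ)
    (h : dder e g = 0) (m : ℕ) :
    MvPolynomial.eval (fun j => (x j : ℚ) + m * e j) g
      = MvPolynomial.eval (fun j => (x j : ℚ)) g := by
  have hd : (rayP x e g).derivative = 0 := by rw [rayP_derivative, h, rayP, map_zero]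
  have hdeg := Polynomial.natDegree_eq_zero_of_derivative_eq_zero hd
  have hC := Polynomial.eq_C_of_natDegree_eq_zero hdeg
  have h1 := rayP_eval x e g (m : ℚ)
  have h0 := rayP_eval x e g 0
  rw [hC] at h1 h0
  simp only [Polynomial.eval_C] at h1 h0
  rw [← h1, h0]
  norm_num

/-- a nonzero polynomial over ℚ is nonzero at some natural point -/
lemma exists_nat_eval_ne_zero :
    ∀ {n : ℕ} (g : MvPolynomial (Fin n) ℚ), g ≠ 0 →
      ∃ x : Fin n → ℕ, MvPolynomial.eval (fun j => (x j : ℚ)) g ≠ 0 := by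
  intro n
  induction n with
  | zero =>
      intro g hg
      obtain ⟨a, rfl⟩ := MvPolynomial.C_surjective (Fin 0) g
      refine ⟨fun j => 0, ?_⟩
      simp only [MvPolynomial.eval_C]
      intro h
      exact hg (by rw [h, map_zero])
  | succ k ih =>
      intro g hg
      set G := MvPolynomial.finSuccEquiv ℚ k g with hG
      have hGne : G ≠ 0 := by
        intro h
        exact hg ((MvPolynomial.finSuccEquiv ℚ k).injective (h.trans (map_zero _).symm))
      have hlc : G.leadingCoeff ≠ 0 := Polynomial.leadingCoeff_ne_zero.mpr hGne
      obtain ⟨a, ha⟩ := ih G.leadingCoeff hlc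
      set Gm := G.map (MvPolynomial.eval (fun j => (a j : ℚ))) with hGm
      have hGmne : Gm ≠ 0 := by
        intro h
        apply ha
        have h2 := congrArg (fun p => Polynomial.coeff p G.natDegree) h
        simp only [hGm, Polynomial.coeff_map, Polynomial.coeff_zero] at h2
        rw [Polynomial.leadingCoeff]
        exact h2
      have : ∃ m : ℕ, ¬ Gm.IsRoot (m : ℚ) := by
        by_contra hall
        push_neg at hall
        apply hGmne
        apply Polynomial.eq_zero_of_infinite_isRoot
        apply Set.infinite_of_injective_forall_mem (f := fun m : ℕ => (m : ℚ))
        · exact Nat.cast_injective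
        · intro m; exact hall m
      obtain ⟨m, hm⟩ := this
      refine ⟨Fin.cons m a, ?_⟩
      have hpt : (fun j => (((Fin.cons m a : Fin (k+1) → ℕ) j : ℕ) : ℚ))
          = Fin.cons (m : ℚ) (fun j => (a j : ℚ)) := by
        funext j
        cases j using Fin.cases with
        | zero => simp
        | succ i => simp
      rw [hpt, MvPolynomial.eval_eq_eval_mv_eval']
      exact hm


lemma tendsto_pow_div_pow {k d : ℕ} (h : k < d) :
    Tendsto (fun m : ℕ => (m : ℂ) ^ k / (m : ℂ) ^ d) atTop (𝓝 0) := by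
  have hb : ∀ᶠ m : ℕ in atTop, ‖(m : ℂ) ^ k / (m : ℂ) ^ d‖ ≤ 1 / (m : ℝ) := by
    filter_upwards [eventually_ge_atTop 1] with m hm
    have hm1 : (1 : ℝ) ≤ (m : ℝ) := by exact_mod_cast hm
    have hmpos : (0 : ℝ) < (m : ℝ) := lt_of_lt_of_le zero_lt_one hm1
    rw [norm_div, norm_pow, norm_pow, Complex.norm_natCast]
    rw [div_le_div_iff₀ (by positivity) hmpos]
    calc (m:ℝ) ^ k * (m:ℝ) = (m:ℝ) ^ (k+1) := by ring
      _ ≤ (m:ℝ) ^ d := pow_le_pow_right₀ hm1 h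
      _ = 1 * (m:ℝ) ^ d := by ring
  exact squeeze_zero_norm' hb (by simpa using (tendsto_one_div_atTop_nhds_zero_nat : Tendsto (fun n : ℕ => 1 / (n : ℝ)) atTop (𝓝 0)))

lemma tendsto_eval_div_lead (P : Polynomial ℂ) :
    Tendsto (fun m : ℕ => P.eval (m : ℂ) / (m : ℂ) ^ P.natDegree) atTop (𝓝 P.leadingCoeff) := by
  have hev : ∀ m : ℕ, P.eval (m : ℂ) / (m : ℂ) ^ P.natDegree
      = (∑ k ∈ Finset.range P.natDegree, P.coeff k * ((m : ℂ) ^ k / (m : ℂ) ^ P.natDegree))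
        + P.coeff P.natDegree * ((m : ℂ) ^ P.natDegree / (m : ℂ) ^ P.natDegree) := by
    intro m
    rw [Polynomial.eval_eq_sum_range, Finset.sum_range_succ, add_div, Finset.sum_div]
    congr 1
    · exact Finset.sum_congr rfl (fun k _ => by ring)
    · ring
  simp only [hev]
  have h1 : Tendsto (fun m : ℕ => ∑ k ∈ Finset.range P.natDegree,
      P.coeff k * ((m : ℂ) ^ k / (m : ℂ) ^ P.natDegree)) atTop (𝓝 0) := by
    have := tendsto_finset_sum (Finset.range P.natDegree)
      (f := fun k (m : ℕ) => P.coeff k * ((m : ℂ) ^ k / (m : ℂ) ^ P.natDegree))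
      (fun k hk => by
        simpa using (tendsto_pow_div_pow (Finset.mem_range.mp hk)).const_mul (P.coeff k))
    simpa using this
  have h2 : Tendsto (fun m : ℕ => P.coeff P.natDegree *
      ((m : ℂ) ^ P.natDegree / (m : ℂ) ^ P.natDegree)) atTop (𝓝 P.leadingCoeff) := by
    apply Tendsto.congr' _ (tendsto_const_nhds (x := P.leadingCoeff))
    filter_upwards [eventually_ge_atTop 1] with m hm
    have : (m : ℂ) ≠ 0 := by
      exact_mod_cast Nat.cast_ne_zero.mpr (by omega)
    rw [div_self (pow_ne_zero _ this), mul_one, Polynomial.leadingCoeff]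
  simpa using h1.add h2

lemma eventually_lower_bound {P : Polynomial ℂ} (hP : P ≠ 0) :
    ∀ᶠ m : ℕ in atTop,
      ‖P.leadingCoeff‖ / 2 * (m : ℝ) ^ P.natDegree ≤ ‖P.eval (m : ℂ)‖ := by
  have hlc : 0 < ‖P.leadingCoeff‖ := norm_pos_iff.mpr (Polynomial.leadingCoeff_ne_zero.mpr hP)
  have h := (tendsto_eval_div_lead P).norm
  have hev := h.eventually (eventually_gt_nhds (half_lt_self hlc))
  filter_upwards [hev, eventually_ge_atTop 1] with m hm hm1
  have hm0 : ((m : ℂ)) ≠ 0 := by exact_mod_cast Nat.cast_ne_zero.mpr (by omega)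
  have hnd : ‖P.eval (m:ℂ) / (m:ℂ) ^ P.natDegree‖
      = ‖P.eval (m:ℂ)‖ / (m : ℝ) ^ P.natDegree := by
    rw [norm_div, norm_pow, Complex.norm_natCast]
  rw [hnd] at hm
  have hmp : (0:ℝ) < (m : ℝ) ^ P.natDegree := by positivity
  calc ‖P.leadingCoeff‖ / 2 * (m : ℝ) ^ P.natDegree
      ≤ (‖P.eval (m:ℂ)‖ / (m : ℝ) ^ P.natDegree) * (m : ℝ) ^ P.natDegree := by
        apply mul_le_mul_of_nonneg_right (le_of_lt hm) (le_of_lt hmp)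
    _ = ‖P.eval (m:ℂ)‖ := by field_simp

lemma eventually_eps_le {P : Polynomial ℂ} (hP : P ≠ 0) :
    ∀ᶠ m : ℕ in atTop, ‖P.leadingCoeff‖ / 2 ≤ ‖P.eval (m : ℂ)‖ := by
  filter_upwards [eventually_lower_bound hP, eventually_ge_atTop 1] with m hm hm1
  refine le_trans ?_ hm
  have hm1' : (1:ℝ) ≤ (m:ℝ) := by exact_mod_cast hm1
  have hp : (1:ℝ) ≤ (m:ℝ) ^ P.natDegree := one_le_pow₀ hm1'
  have h0 : 0 ≤ ‖P.leadingCoeff‖ / 2 := by positivity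
  nlinarith

lemma tendsto_norm_eval_atTop {P : Polynomial ℂ} (hdeg : 0 < P.natDegree) :
    Tendsto (fun m : ℕ => ‖P.eval (m : ℂ)‖) atTop atTop := by
  have hP : P ≠ 0 := fun h => by simp [h] at hdeg
  have hlc : 0 < ‖P.leadingCoeff‖ := norm_pos_iff.mpr (Polynomial.leadingCoeff_ne_zero.mpr hP)
  apply tendsto_atTop_mono' _ _ (Tendsto.const_mul_atTop (half_pos hlc)
    (tendsto_natCast_atTop_atTop (R := ℝ)))
  filter_upwards [eventually_lower_bound hP, eventually_ge_atTop 1] with m hm hm1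
  refine le_trans ?_ hm
  apply mul_le_mul_of_nonneg_left _ (by positivity)
  have hm1' : (1:ℝ) ≤ (m:ℝ) := by exact_mod_cast hm1
  calc (m:ℝ) = (m:ℝ) ^ 1 := (pow_one _).symm
    _ ≤ (m:ℝ) ^ P.natDegree := pow_le_pow_right₀ hm1' hdeg

lemma eq_zero_of_tendsto_eval_zero {P : Polynomial ℂ}
    (h : Tendsto (fun m : ℕ => P.eval (m : ℂ)) atTop (𝓝 0)) : P = 0 := by
  by_contra hP
  have hlc : 0 < ‖P.leadingCoeff‖ := norm_pos_iff.mpr (Polynomial.leadingCoeff_ne_zero.mpr hP)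
  have h1 := eventually_eps_le hP
  have h2 := (h.norm).eventually (eventually_lt_nhds
    (show ‖(0:ℂ)‖ < ‖P.leadingCoeff‖ / 2 by simpa using half_pos hlc))
  obtain ⟨m, hma, hmb⟩ := (h1.and h2).exists
  exact absurd (lt_of_le_of_lt hma hmb) (lt_irrefl _)

lemma tendsto_eval_mul_pow_zero (P : Polynomial ℂ) {r : ℝ} (h0 : 0 ≤ r) (h1 : r < 1) :
    Tendsto (fun m : ℕ => P.eval (m : ℂ) * ((r : ℂ)) ^ m) atTop (𝓝 0) := by
  have hev : ∀ m : ℕ, P.eval (m : ℂ) * ((r : ℂ)) ^ m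
      = ∑ k ∈ Finset.range (P.natDegree + 1), P.coeff k * (m : ℂ) ^ k * ((r:ℂ)) ^ m := by
    intro m
    rw [Polynomial.eval_eq_sum_range, Finset.sum_mul]
  simp only [hev]
  have hterm : ∀ k ∈ Finset.range (P.natDegree + 1),
      Tendsto (fun m : ℕ => P.coeff k * (m : ℂ) ^ k * ((r:ℂ)) ^ m) atTop (𝓝 0) := by
    intro k _
    have hb : ∀ m : ℕ, ‖P.coeff k * (m : ℂ) ^ k * ((r:ℂ)) ^ m‖
        ≤ ‖P.coeff k‖ * ((m:ℝ) ^ k * r ^ m) := by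
      intro m
      rw [norm_mul, norm_mul, norm_pow, norm_pow, Complex.norm_natCast, Complex.norm_real,
        Real.norm_eq_abs, abs_of_nonneg h0]
      ring_nf
      exact le_refl _
    exact squeeze_zero_norm hb
      (by simpa using (tendsto_pow_const_mul_const_pow_of_lt_one k h0 h1).const_mul ‖P.coeff k‖)
  have := tendsto_finset_sum (Finset.range (P.natDegree + 1)) hterm
  simpa using this


noncomputable def Sfun (q : ℝ) {n N : ℕ} (s : Finset (Fin N)) (β : Fin N → ℂ)
    (f : Fin N → MvPolynomial (Fin n) ℚ) (φ : Fin N → ((Fin n → ℚ) →ₗ[ℚ] ℚ))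
    (x : Fin n → ℕ) : ℂ :=
  ∑ i ∈ s, β i * ((MvPolynomial.eval (fun j => (x j : ℚ)) (f i) : ℚ) : ℂ) *
    ((q ^ (((φ i) (fun j => (x j : ℚ)) : ℚ) : ℝ) : ℝ) : ℂ)

lemma point_shift (x e : Fin n → ℕ) (m : ℕ) :
    (fun j => ((x j + m * e j : ℕ) : ℚ))
      = (fun j => (x j : ℚ)) + (m : ℚ) • (fun j => (e j : ℚ)) := by
  funext j
  simp only [Pi.add_apply, Pi.smul_apply, smul_eq_mul]
  push_cast
  ring

lemma rpow_shift {q : ℝ} (hq : 0 < q) (ψ : (Fin n → ℚ) →ₗ[ℚ] ℚ) (x e : Fin n → ℕ) (m : ℕ) :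
    q ^ ((ψ (fun j => ((x j + m * e j : ℕ) : ℚ)) : ℚ) : ℝ)
      = q ^ ((ψ (fun j => (x j : ℚ)) : ℚ) : ℝ)
        * (q ^ ((ψ (fun j => (e j : ℚ)) : ℚ) : ℝ)) ^ m := by
  rw [point_shift, map_add, map_smul, smul_eq_mul]
  push_cast
  rw [mul_comm ((m:ℝ)) _, Real.rpow_add hq, Real.rpow_mul_natCast hq.le]

lemma Sfun_shift {q : ℝ} (hq : 0 < q) {N : ℕ} (s : Finset (Fin N)) (β : Fin N → ℂ)
    (f : Fin N → MvPolynomial (Fin n) ℚ) (φ : Fin N → ((Fin n → ℚ) →ₗ[ℚ] ℚ))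
    (x e : Fin n → ℕ) (m : ℕ) :
    Sfun q s β f φ (fun j => x j + m * e j)
      = ∑ i ∈ s, (β i * ((q ^ (((φ i) (fun j => (x j : ℚ)) : ℚ) : ℝ) : ℝ) : ℂ))
          * ((rayC x e (f i)).eval (m : ℂ))
          * (((q ^ (((φ i) (fun j => (e j : ℚ)) : ℚ) : ℝ) : ℝ) : ℂ)) ^ m := by
  unfold Sfun
  refine Finset.sum_congr rfl (fun i _ => ?_)
  rw [rayC_eval, rpow_shift hq]
  have hpt : (fun j => ((x j + m * e j : ℕ) : ℚ)) = (fun j => (x j : ℚ) + m * e j) := by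
    funext j; push_cast; ring
  rw [hpt]
  push_cast
  ring

lemma regroup {ι : Type*} (s : Finset ι) (pr : ι → Prop) [DecidablePred pr]
    (γ : ι → ℂ) (p : ι → Polynomial ℂ) (r : ι → ℝ) (R : ℝ) (hR : R ≠ 0)
    (hT : ∀ i ∈ s, pr i → r i = R) (m : ℕ) :
    ∑ i ∈ s, γ i * (p i).eval (m : ℂ) * ((r i : ℝ) : ℂ) ^ m
      = ((R : ℂ)) ^ m * ((∑ i ∈ s.filter pr, γ i • p i).eval (m : ℂ)
          + ∑ i ∈ s.filter (fun i => ¬ pr i), γ i * (p i).eval (m : ℂ)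
              * (((r i / R : ℝ)) : ℂ) ^ m) := by
  have hRC : ((R : ℂ)) ^ m ≠ 0 := pow_ne_zero _ (by exact_mod_cast hR)
  rw [Polynomial.eval_finset_sum, mul_add, Finset.mul_sum, Finset.mul_sum]
  rw [← Finset.sum_filter_add_sum_filter_not s pr
    (fun i => γ i * (p i).eval (m : ℂ) * ((r i : ℝ) : ℂ) ^ m)]
  congr 1
  · refine Finset.sum_congr rfl (fun i hi => ?_)
    rw [Finset.mem_filter] at hi
    rw [hT i hi.1 hi.2]
    simp only [Polynomial.eval_smul, smul_eq_mul]
    ring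
  · refine Finset.sum_congr rfl (fun i hi => ?_)
    have : (((r i / R : ℝ)) : ℂ) = ((r i : ℝ) : ℂ) / ((R : ℝ) : ℂ) := by push_cast; ring
    rw [this, div_pow]
    field_simp

lemma tail0 {ι : Type*} (s : Finset ι) (γ : ι → ℂ) (p : ι → Polynomial ℂ) (ρ : ι → ℝ)
    (h : ∀ i ∈ s, 0 ≤ ρ i ∧ ρ i < 1) :
    Tendsto (fun m : ℕ => ∑ i ∈ s, γ i * (p i).eval (m : ℂ) * ((ρ i : ℝ) : ℂ) ^ m)
      atTop (𝓝 0) := by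
  have hterm : ∀ i ∈ s,
      Tendsto (fun m : ℕ => γ i * (p i).eval (m : ℂ) * ((ρ i : ℝ) : ℂ) ^ m) atTop (𝓝 0) := by
    intro i hi
    have := (tendsto_eval_mul_pow_zero (p i) (h i hi).1 (h i hi).2).const_mul (γ i)
    simpa [mul_assoc] using this
  have := tendsto_finset_sum s hterm
  simpa using this


lemma key {q : ℝ} (hq : 1 < q) {N : ℕ} (β : Fin N → ℂ) (g : Fin N → MvPolynomial (Fin n) ℚ)
    (φ : Fin N → ((Fin n → ℚ) →ₗ[ℚ] ℚ)) :
    ∀ s : Finset (Fin N), (∀ i ∈ s, β i ≠ 0) → (∀ i ∈ s, g i ≠ 0) →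
      Set.InjOn φ ↑s → (∀ x : Fin n → ℕ, Sfun q s β g φ x = 0) → s = ∅ := by
  classical
  have hq0 : (0 : ℝ) < q := lt_trans zero_lt_one hq
  intro s
  induction s using Finset.strongInduction with
  | _ s ih =>
    intro hβ hg hφ hzero
    by_contra hne
    obtain ⟨i0, hi0⟩ := Finset.nonempty_of_ne_empty hne
    by_cases hone : ∀ i ∈ s, i = i0
    · -- singleton case
      obtain ⟨x, hx⟩ := exists_nat_eval_ne_zero (g i0) (hg i0 hi0)
      have h0 := hzero x
      unfold Sfun at h0
      rw [Finset.sum_eq_single i0] at h0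
      · have h1 : β i0 ≠ 0 := hβ i0 hi0
        have h2 : ((MvPolynomial.eval (fun j => (x j : ℚ)) (g i0) : ℚ) : ℂ) ≠ 0 := by
          exact_mod_cast hx
        have h3 : ((q ^ (((φ i0) (fun j => (x j : ℚ)) : ℚ) : ℝ) : ℝ) : ℂ) ≠ 0 := by
          exact_mod_cast (Real.rpow_pos_of_pos hq0 _).ne'
        exact (mul_ne_zero (mul_ne_zero h1 h2) h3) h0
      · intro i hi hii0
        exact absurd (hone i hi) hii0
      · intro h; exact absurd hi0 h
    · push_neg at hone
      obtain ⟨i1, hi1, hi10⟩ := hone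
      have hφne : φ i1 ≠ φ i0 := fun h => hi10 (hφ hi1 hi0 h)
      have hbasis : ∃ j : Fin n, φ i1 (Pi.single j 1) ≠ φ i0 (Pi.single j 1) := by
        by_contra hall
        push_neg at hall
        exact hφne (Module.Basis.ext (Pi.basisFun ℚ (Fin n)) (fun j => by simpa using hall j))
      obtain ⟨j, hj⟩ := hbasis
      set e : Fin n → ℕ := fun j' => if j' = j then 1 else 0 with he
      have hcast : (fun j' => ((e j' : ℕ) : ℚ)) = (Pi.single j 1 : Fin n → ℚ) := by
        funext j'
        by_cases h : j' = j <;> simp [he, h, Pi.single_apply]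
      set c : Fin N → ℚ := fun i => φ i (fun j' => (e j' : ℚ)) with hc
      have hc10 : c i1 ≠ c i0 := by
        simp only [hc, hcast]
        exact hj
      have hsne : s.Nonempty := ⟨i0, hi0⟩
      set cmax : ℚ := s.sup' hsne c with hcmax
      obtain ⟨imax, himax, hmaxeq⟩ := Finset.exists_mem_eq_sup' hsne c
      set T : Finset (Fin N) := s.filter (fun i => c i = cmax) with hTdef
      have hTsub : T ⊆ s := Finset.filter_subset _ _
      have himaxT : imax ∈ T := Finset.mem_filter.mpr ⟨himax, hmaxeq.symm⟩
      have hTss : T ⊂ s := by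
        rw [Finset.ssubset_iff_of_subset hTsub]
        have hlow : ∃ i ∈ s, c i < cmax := by
          rcases lt_or_gt_of_ne hc10 with h | h
          · exact ⟨i1, hi1, lt_of_lt_of_le h (Finset.le_sup' c hi0)⟩
          · exact ⟨i0, hi0, lt_of_lt_of_le h (Finset.le_sup' c hi1)⟩
        obtain ⟨iw, hiw, hiwlt⟩ := hlow
        exact ⟨iw, hiw, fun hmem => absurd (Finset.mem_filter.mp hmem).2 (ne_of_lt hiwlt)⟩
      -- show the T-sum vanishes everywhere
      have hzeroT : ∀ x : Fin n → ℕ, Sfun q T β g φ x = 0 := by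
        intro x
        set γ : Fin N → ℂ :=
          fun i => β i * ((q ^ (((φ i) (fun j' => (x j' : ℚ)) : ℚ) : ℝ) : ℝ) : ℂ) with hγ
        set p : Fin N → Polynomial ℂ := fun i => rayC x e (g i) with hp
        set r : Fin N → ℝ := fun i => q ^ ((c i : ℚ) : ℝ) with hr
        set R : ℝ := q ^ ((cmax : ℚ) : ℝ) with hR
        have hRne : R ≠ 0 := (Real.rpow_pos_of_pos hq0 _).ne'
        have hrT : ∀ i ∈ s, (fun i => c i = cmax) i → r i = R := by
          intro i _ hci
          simp only [hr, hR, hci]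
        set PT : Polynomial ℂ := ∑ i ∈ T, γ i • p i with hPT
        have H : ∀ m : ℕ,
            ((R : ℂ)) ^ m * (PT.eval (m : ℂ)
              + ∑ i ∈ s.filter (fun i => ¬ c i = cmax), γ i * (p i).eval (m : ℂ)
                  * (((r i / R : ℝ)) : ℂ) ^ m) = 0 := by
          intro m
          rw [← regroup s (fun i => c i = cmax) γ p r R hRne hrT m]
          rw [← Sfun_shift hq0 s β g φ x e m]
          exact hzero _
        have Hsum : ∀ m : ℕ, PT.eval (m : ℂ)
            = - ∑ i ∈ s.filter (fun i => ¬ c i = cmax), γ i * (p i).eval (m : ℂ)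
                  * (((r i / R : ℝ)) : ℂ) ^ m := by
          intro m
          have h0 := H m
          have hRm : ((R : ℂ)) ^ m ≠ 0 := pow_ne_zero _ (by exact_mod_cast hRne)
          rcases mul_eq_zero.mp h0 with h | h
          · exact absurd h hRm
          · linear_combination h
        have htail : Tendsto (fun m : ℕ =>
            ∑ i ∈ s.filter (fun i => ¬ c i = cmax), γ i * (p i).eval (m : ℂ)
                  * (((r i / R : ℝ)) : ℂ) ^ m) atTop (𝓝 0) := by
          apply tail0
          intro i hi
          rw [Finset.mem_filter] at hi
          have hle : c i ≤ cmax := Finset.le_sup' c hi.1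
          have hlt : c i < cmax := lt_of_le_of_ne hle hi.2
          have hrlt : r i < R := by
            rw [hr, hR]
            exact (Real.rpow_lt_rpow_left_iff hq).mpr (by exact_mod_cast hlt)
          have hrpos : 0 < r i := Real.rpow_pos_of_pos hq0 _
          have hRpos : 0 < R := Real.rpow_pos_of_pos hq0 _
          constructor
          · positivity
          · rw [div_lt_one hRpos]; exact hrlt
        have hPT0 : PT = 0 := by
          apply eq_zero_of_tendsto_eval_zero
          have := htail.neg
          simp only [neg_zero] at this
          exact Tendsto.congr (fun m => (Hsum m).symm) this
        have hST : Sfun q T β g φ x = PT.eval (0 : ℂ) := by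
          rw [hPT, Polynomial.eval_finset_sum]
          unfold Sfun
          refine Finset.sum_congr rfl (fun i _ => ?_)
          simp only [Polynomial.eval_smul, smul_eq_mul, hγ, hp, rayC_eval_zero]
          ring
        rw [hST, hPT0]
        simp
      have hTempty := ih T hTss (fun i hi => hβ i (hTsub hi)) (fun i hi => hg i (hTsub hi))
        (hφ.mono (by exact_mod_cast hTsub)) hzeroT
      rw [hTempty] at himaxT
      exact absurd himaxT (Finset.notMem_empty _)

lemma key_exists {q : ℝ} (hq : 1 < q) {N : ℕ} (β : Fin N → ℂ)
    (g : Fin N → MvPolynomial (Fin n) ℚ) (φ : Fin N → ((Fin n → ℚ) →ₗ[ℚ] ℚ))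
    (s : Finset (Fin N)) (hs : s.Nonempty) (hβ : ∀ i ∈ s, β i ≠ 0)
    (hg : ∀ i ∈ s, g i ≠ 0) (hφ : Set.InjOn φ ↑s) :
    ∃ x : Fin n → ℕ, Sfun q s β g φ x ≠ 0 := by
  by_contra hall
  push_neg at hall
  rw [key hq β g φ s hβ hg hφ hall] at hs
  exact Finset.not_nonempty_empty hs


lemma norm_add_ge (a b : ℂ) : ‖a‖ - ‖b‖ ≤ ‖a + b‖ := by
  have h : ‖a‖ ≤ ‖a + b‖ + ‖b‖ := by
    calc ‖a‖ = ‖(a + b) + (-b)‖ := by ring_nf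
      _ ≤ ‖a + b‖ + ‖-b‖ := norm_add_le _ _
      _ = ‖a + b‖ + ‖b‖ := by rw [norm_neg]
  linarith

lemma blowA {R : ℝ} (hR : 1 < R) {P : Polynomial ℂ} (hP : P ≠ 0) {t : ℕ → ℂ}
    (ht : Tendsto t atTop (𝓝 0)) :
    Tendsto (fun m : ℕ => ‖((R : ℂ)) ^ m * (P.eval (m : ℂ) + t m)‖) atTop atTop := by
  set ε := ‖P.leadingCoeff‖ / 2 with hε'
  have hε : 0 < ε := half_pos (norm_pos_iff.mpr (Polynomial.leadingCoeff_ne_zero.mpr hP))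
  have h1 := eventually_eps_le hP
  have h2 := (ht.norm).eventually (eventually_lt_nhds
    (show ‖(0:ℂ)‖ < ε / 2 by simpa using half_pos hε))
  have hR0 : (0:ℝ) ≤ R := le_of_lt (lt_trans zero_lt_one hR)
  apply tendsto_atTop_mono' atTop (f₁ := fun m : ℕ => ε / 2 * R ^ m)
  · filter_upwards [h1, h2] with m hm1 hm2
    have hnorm : ‖((R : ℂ)) ^ m * (P.eval (m : ℂ) + t m)‖
        = R ^ m * ‖P.eval (m : ℂ) + t m‖ := by
      rw [norm_mul, norm_pow, Complex.norm_real, Real.norm_eq_abs, abs_of_nonneg hR0]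
    rw [hnorm, mul_comm (ε / 2) _]
    apply mul_le_mul_of_nonneg_left _ (by positivity)
    have := norm_add_ge (P.eval (m : ℂ)) (t m)
    linarith
  · exact (tendsto_pow_atTop_atTop_of_one_lt hR).const_mul_atTop (half_pos hε)

lemma blowB {P : Polynomial ℂ} (hdeg : 0 < P.natDegree) {t : ℕ → ℂ}
    (ht : Tendsto t atTop (𝓝 0)) :
    Tendsto (fun m : ℕ => ‖P.eval (m : ℂ) + t m‖) atTop atTop := by
  have h2 := (ht.norm).eventually (eventually_lt_nhds
    (show ‖(0:ℂ)‖ < 1 by simp))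
  apply tendsto_atTop_mono' atTop (f₁ := fun m : ℕ => ‖P.eval (m : ℂ)‖ + (-1))
  · filter_upwards [h2] with m hm2
    have := norm_add_ge (P.eval (m : ℂ)) (t m)
    linarith
  · exact tendsto_atTop_add_const_right atTop (-1) (tendsto_norm_eval_atTop hdeg)

lemma eval_zero_sum {q : ℝ} {N : ℕ} (s : Finset (Fin N)) (β : Fin N → ℂ)
    (g : Fin N → MvPolynomial (Fin n) ℚ) (φ : Fin N → ((Fin n → ℚ) →ₗ[ℚ] ℚ))
    (x e : Fin n → ℕ) :
    (∑ i ∈ s, (β i * ((q ^ (((φ i) (fun j => (x j : ℚ)) : ℚ) : ℝ) : ℝ) : ℂ))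
        • rayC x e (g i)).eval (0 : ℂ) = Sfun q s β g φ x := by
  rw [Polynomial.eval_finset_sum]
  unfold Sfun
  refine Finset.sum_congr rfl (fun i _ => ?_)
  simp only [Polynomial.eval_smul, smul_eq_mul, rayC_eval_zero]
  ring

lemma derivative_eval_zero_sum {q : ℝ} {N : ℕ} (s : Finset (Fin N)) (β : Fin N → ℂ)
    (g : Fin N → MvPolynomial (Fin n) ℚ) (φ : Fin N → ((Fin n → ℚ) →ₗ[ℚ] ℚ))
    (x e : Fin n → ℕ) :
    (Polynomial.derivative (∑ i ∈ s, (β i * ((q ^ (((φ i) (fun j => (x j : ℚ)) : ℚ) : ℝ) : ℝ) : ℂ))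
        • rayC x e (g i))).eval (0 : ℂ)
      = Sfun q s β (fun i => dder e (g i)) φ x := by
  rw [map_sum]
  have : ∀ i ∈ s, Polynomial.derivative ((β i * ((q ^ (((φ i) (fun j => (x j : ℚ)) : ℚ) : ℝ) : ℝ) : ℂ))
      • rayC x e (g i))
      = (β i * ((q ^ (((φ i) (fun j => (x j : ℚ)) : ℚ) : ℝ) : ℝ) : ℂ)) • rayC x e (dder e (g i)) := by
    intro i _
    rw [Polynomial.derivative_smul, rayC_derivative]
  rw [Finset.sum_congr rfl this]
  exact eval_zero_sum s β (fun i => dder e (g i)) φ x e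


lemma main_decomp {q : ℝ} (hq : 1 < q) {N : ℕ} (α : Fin N → ℂ)
    (f : Fin N → MvPolynomial (Fin n) ℚ) (φ : Fin N → ((Fin n → ℚ) →ₗ[ℚ] ℚ))
    (x e : Fin n → ℕ) (cmax : ℚ)
    (hcle : ∀ i', (φ i') (fun j => (e j : ℚ)) ≤ cmax) :
    ∃ t : ℕ → ℂ, Tendsto t atTop (𝓝 0) ∧ ∀ m : ℕ,
      Sfun q Finset.univ α f φ (fun j => x j + m * e j)
        = (((q ^ ((cmax : ℚ) : ℝ) : ℝ)) : ℂ) ^ m *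
          ((∑ i ∈ Finset.univ.filter (fun i' => (φ i') (fun j => (e j : ℚ)) = cmax),
            (α i * ((q ^ (((φ i) (fun j => (x j : ℚ)) : ℚ) : ℝ) : ℝ) : ℂ)) • rayC x e (f i)).eval (m : ℂ)
            + t m) := by
  classical
  have hq0 : (0 : ℝ) < q := lt_trans zero_lt_one hq
  set c : Fin N → ℚ := fun i' => (φ i') (fun j => (e j : ℚ)) with hc
  set γ : Fin N → ℂ :=
    fun i => α i * ((q ^ (((φ i) (fun j => (x j : ℚ)) : ℚ) : ℝ) : ℝ) : ℂ) with hγ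
  set p : Fin N → Polynomial ℂ := fun i => rayC x e (f i) with hp
  set r : Fin N → ℝ := fun i => q ^ ((c i : ℚ) : ℝ) with hr
  set R : ℝ := q ^ ((cmax : ℚ) : ℝ) with hR
  have hRne : R ≠ 0 := (Real.rpow_pos_of_pos hq0 _).ne'
  refine ⟨fun m => ∑ i ∈ Finset.univ.filter (fun i' => ¬ c i' = cmax),
    γ i * (p i).eval (m : ℂ) * (((r i / R : ℝ)) : ℂ) ^ m, ?_, ?_⟩
  · apply tail0 (Finset.univ.filter (fun i' => ¬ c i' = cmax)) γ p (fun i => r i / R)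
    intro i hi
    rw [Finset.mem_filter] at hi
    have hlt : c i < cmax := lt_of_le_of_ne (hcle i) hi.2
    have hrlt : r i < R := (Real.rpow_lt_rpow_left_iff hq).mpr (by exact_mod_cast hlt)
    have hrpos : 0 < r i := Real.rpow_pos_of_pos hq0 _
    have hRpos : 0 < R := Real.rpow_pos_of_pos hq0 _
    exact ⟨by positivity, by rw [div_lt_one hRpos]; exact hrlt⟩
  · intro m
    rw [Sfun_shift hq0 Finset.univ α f φ x e m]
    exact regroup Finset.univ (fun i' => c i' = cmax) γ p r R hRne
      (fun i _ hci => by simp only [hr, hR, hci]) m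

end VP



/-- The V-function `x ↦ Σ_i α_i · f_i(x) · q^{φ_i(x)}` on `ℤ_{≥0}^n`. -/
noncomputable def Vfun (q : ℝ) {n N : ℕ} (α : Fin N → ℂ)
    (f : Fin N → MvPolynomial (Fin n) ℚ) (φ : Fin N → ((Fin n → ℚ) →ₗ[ℚ] ℚ))
    (x : Fin n → ℕ) : ℂ :=
  ∑ i : Fin N, α i * ((MvPolynomial.eval (fun j => (x j : ℚ)) (f i) : ℚ) : ℂ) *
    ((q ^ (((φ i) (fun j => (x j : ℚ)) : ℚ) : ℝ) : ℝ) : ℂ)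

open VP Filter Polynomial in
/-- For a V-function `R(x) = Σ α_i f_i(x) q^{φ_i(x)}` with nonzero coefficients `α_i`,
nonzero polynomials `f_i` and pairwise distinct linear functionals `φ_i`, the following are
equivalent: (a) there are no `p, v ∈ ℤ_{≥0}^n` with `|R(p + m·v)| → ∞`;
(b) for every `e ∈ ℤ_{≥0}^n` and every `i`, `φ_i(e) ≤ 0`, and if `φ_i(e) = 0` then the
directional derivative `Σ_j e_j ∂f_i/∂x_j` is the zero polynomial. -/
theorem vfunction_no_ray_blowup_iff (q : ℝ) (hq : 1 < q) (n N : ℕ)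
    (α : Fin N → ℂ) (hα : ∀ i, α i ≠ 0)
    (f : Fin N → MvPolynomial (Fin n) ℚ) (hf : ∀ i, f i ≠ 0)
    (φ : Fin N → ((Fin n → ℚ) →ₗ[ℚ] ℚ)) (hφ : Function.Injective φ) :
    (¬ ∃ P v : Fin n → ℕ, Filter.Tendsto
        (fun m : ℕ => ‖Vfun q α f φ (fun j => P j + m * v j)‖)
        Filter.atTop Filter.atTop) ↔
    (∀ e : Fin n → ℕ, ∀ i : Fin N,
      (φ i) (fun j => (e j : ℚ)) ≤ 0 ∧
      ((φ i) (fun j => (e j : ℚ)) = 0 →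
        ∑ j : Fin n, MvPolynomial.C (e j : ℚ) * MvPolynomial.pderiv j (f i) = 0)) := by
  classical
  have hq0 : (0 : ℝ) < q := lt_trans zero_lt_one hq
  have hVS : ∀ x : Fin n → ℕ, Vfun q α f φ x = VP.Sfun q Finset.univ α f φ x := by
    intro x
    rfl
  constructor
  · -- (a) → (b)
    intro hnb e i
    by_contra hcon
    rw [not_and_or] at hcon
    have hcase : (0 < (φ i) (fun j => (e j : ℚ))) ∨
        ((φ i) (fun j => (e j : ℚ)) = 0 ∧ dder e (f i) ≠ 0) := by
      rcases hcon with h | h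
      · left; push_neg at h; exact h
      · right
        rw [Classical.not_imp] at h
        exact ⟨h.1, h.2⟩
    apply hnb
    have hNne : Nonempty (Fin N) := ⟨i⟩
    set c : Fin N → ℚ := fun i' => (φ i') (fun j => (e j : ℚ)) with hc
    set cmax : ℚ := Finset.univ.sup' Finset.univ_nonempty c with hcmax
    have hcle : ∀ i', c i' ≤ cmax := fun i' => Finset.le_sup' c (Finset.mem_univ i')
    set T : Finset (Fin N) := Finset.univ.filter (fun i' => c i' = cmax) with hT
    obtain ⟨imax, _, hmaxeq⟩ := Finset.exists_mem_eq_sup' Finset.univ_nonempty c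
    have hTne : T.Nonempty := ⟨imax, Finset.mem_filter.mpr ⟨Finset.mem_univ _, hmaxeq.symm⟩⟩
    by_cases hpos : 0 < cmax
    · -- branch A : the dominating exponent is positive
      obtain ⟨x, hx⟩ := key_exists hq α f φ T hTne (fun i' _ => hα i') (fun i' _ => hf i')
        (hφ.injOn)
      obtain ⟨t, htail, hdec⟩ := main_decomp hq α f φ x e cmax hcle
      refine ⟨x, e, ?_⟩
      have hR1 : 1 < q ^ ((cmax : ℚ) : ℝ) := by
        have h0 : q ^ ((0 : ℝ)) < q ^ ((cmax : ℚ) : ℝ) :=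
          (Real.rpow_lt_rpow_left_iff hq).mpr (by exact_mod_cast hpos)
        simpa using h0
      have hPTne : (∑ i' ∈ T,
          (α i' * ((q ^ (((φ i') (fun j => (x j : ℚ)) : ℚ) : ℝ) : ℝ) : ℂ)) • rayC x e (f i')) ≠ 0 := by
        intro h0
        apply hx
        rw [← eval_zero_sum T α f φ x e, h0]
        simp
      have := blowA hR1 hPTne htail
      apply this.congr
      intro m
      rw [hVS, hdec m]
    · -- branch B : max exponent is zero, nonconstant top polynomial
      have hci0 : c i = 0 ∧ dder e (f i) ≠ 0 := by
        rcases hcase with h | h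
        · exact absurd (lt_of_lt_of_le h (hcle i)) hpos
        · exact h
      have hcmax0 : cmax = 0 :=
        le_antisymm (not_lt.mp hpos) (hci0.1 ▸ hcle i)
      set T2 : Finset (Fin N) := T.filter (fun i' => dder e (f i') ≠ 0) with hT2
      have hiT : i ∈ T := Finset.mem_filter.mpr ⟨Finset.mem_univ _, hci0.1.trans hcmax0.symm⟩
      have hiT2 : i ∈ T2 := Finset.mem_filter.mpr ⟨hiT, hci0.2⟩
      obtain ⟨x, hx⟩ := key_exists hq α (fun i' => dder e (f i')) φ T2 ⟨i, hiT2⟩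
        (fun i' _ => hα i') (fun i' hi' => (Finset.mem_filter.mp hi').2) (hφ.injOn)
      obtain ⟨t, htail, hdec⟩ := main_decomp hq α f φ x e cmax hcle
      refine ⟨x, e, ?_⟩
      set PT : Polynomial ℂ := ∑ i' ∈ T,
        (α i' * ((q ^ (((φ i') (fun j => (x j : ℚ)) : ℚ) : ℝ) : ℝ) : ℂ)) • rayC x e (f i') with hPT
      have hder : PT.derivative.eval (0 : ℂ)
          = Sfun q T α (fun i' => dder e (f i')) φ x :=
        derivative_eval_zero_sum T α f φ x e
      have hSsub : Sfun q T α (fun i' => dder e (f i')) φ x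
          = Sfun q T2 α (fun i' => dder e (f i')) φ x := by
        unfold Sfun
        refine (Finset.sum_subset (Finset.filter_subset _ _) ?_).symm
        intro i' hi' hni'
        have hdd0 : dder e (f i') = 0 := by
          by_contra hne
          exact hni' (Finset.mem_filter.mpr ⟨hi', hne⟩)
        simp [hdd0]
      have hPTd : PT.derivative ≠ 0 := by
        intro h0
        apply hx
        rw [← hSsub, ← hder, h0]
        simp
      have hdeg : 0 < PT.natDegree := by
        by_contra hd
        push_neg at hd
        have hd0 : PT.natDegree = 0 := Nat.le_zero.mp hd
        have := Polynomial.eq_C_of_natDegree_eq_zero hd0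
        apply hPTd
        rw [this]
        simp
      have hRone : ((q ^ ((cmax : ℚ) : ℝ) : ℝ) : ℂ) = 1 := by
        rw [hcmax0]
        norm_num
      have := blowB hdeg htail
      apply this.congr
      intro m
      rw [hVS, hdec m, hRone]
      simp
  · -- (b) → (a)
    intro hb
    rintro ⟨P, v, hT⟩
    set c : Fin N → ℚ := fun i' => (φ i') (fun j => (v j : ℚ)) with hc
    set γ : Fin N → ℂ :=
      fun i => α i * ((q ^ (((φ i) (fun j => (P j : ℚ)) : ℚ) : ℝ) : ℝ) : ℂ) with hγ
    set a : Fin N → ℂ := fun i => if c i = 0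
      then γ i * ((MvPolynomial.eval (fun j => (P j : ℚ)) (f i) : ℚ) : ℂ) else 0 with ha
    have hterm : ∀ i ∈ Finset.univ, Tendsto (fun m : ℕ =>
        γ i * (rayC P v (f i)).eval (m : ℂ)
          * (((q ^ ((c i : ℚ) : ℝ) : ℝ)) : ℂ) ^ m) atTop (𝓝 (a i)) := by
      intro i _
      by_cases hci : c i = 0
      · have hdd : dder v (f i) = 0 := by
          unfold VP.dder
          exact (hb v i).2 hci
        have hconst : ∀ m : ℕ, (rayC P v (f i)).eval (m : ℂ)
            = ((MvPolynomial.eval (fun j => (P j : ℚ)) (f i) : ℚ) : ℂ) := by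
          intro m
          rw [rayC_eval, eval_ray_const P v (f i) hdd m]
        have hr1 : ((q ^ ((c i : ℚ) : ℝ) : ℝ) : ℂ) = 1 := by
          rw [hci]
          norm_num
        have heq : (fun m : ℕ => γ i * (rayC P v (f i)).eval (m : ℂ)
            * (((q ^ ((c i : ℚ) : ℝ) : ℝ)) : ℂ) ^ m)
            = fun _ : ℕ => γ i * ((MvPolynomial.eval (fun j => (P j : ℚ)) (f i) : ℚ) : ℂ) := by
          funext m
          rw [hconst m, hr1, one_pow, mul_one]
        rw [heq, ha]
        simp only [hci, if_pos]
        exact tendsto_const_nhds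
      · have hle : c i ≤ 0 := (hb v i).1
        have hlt : c i < 0 := lt_of_le_of_ne hle hci
        have hrlt : q ^ ((c i : ℚ) : ℝ) < 1 := by
          have h0 : q ^ ((c i : ℚ) : ℝ) < q ^ ((0 : ℝ)) :=
            (Real.rpow_lt_rpow_left_iff hq).mpr (by exact_mod_cast hlt)
          simpa using h0
        have hrpos : (0:ℝ) ≤ q ^ ((c i : ℚ) : ℝ) := (Real.rpow_pos_of_pos hq0 _).le
        have := (tendsto_eval_mul_pow_zero (rayC P v (f i)) hrpos hrlt).const_mul (γ i)
        simp only [ha, hci, if_false, mul_zero] at *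
        apply Tendsto.congr _ this
        intro m
        ring
    have hsum := tendsto_finset_sum Finset.univ hterm
    have hV : Tendsto (fun m : ℕ => Vfun q α f φ (fun j => P j + m * v j)) atTop
        (𝓝 (∑ i : Fin N, a i)) := by
      apply hsum.congr
      intro m
      rw [hVS, Sfun_shift hq0 Finset.univ α f φ P v m]
    exact not_tendsto_atTop_of_tendsto_nhds hV.norm hT
end

section
/- Let d ≥ 1 and n ≥ 1 be integers and let g_1, h_1, …, g_n, h_n ∈ GL_d(ℂ). For an invertible matrix a and a matrix M, write M^a = a M a⁻¹, and set P_i = [g_{i+1}, h_{i+1}]⋯[g_n, h_n] (so P_n is the identity), where [x,y] = x y x⁻¹ y⁻¹. Define the linear map L from 2n-tuples of d×d complex matrices to d×d complex matrices by L(X_1, Y_1, …, X_n, Y_n) = Σ_{i=1}^n ( X_i^{g_i h_i^{-1}} − X_i^{g_i} + Y_i^{g_i} − Y_i )^{P_i^{-1} h_i}. Then for a d×d complex matrix Z, one has tr(Z · L(X_1,…,Y_n)) = 0 for all (X_1, Y_1, …, X_n, Y_n) if and only if Z commutes with g_i and with h_i for every i = 1, …, n. -/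
/-- Conjugation of a matrix by an element of `GL_d(ℂ)`: `M^a = a·M·a⁻¹`. -/
noncomputable def mconj {d : ℕ} (a : Matrix.GeneralLinearGroup (Fin d) ℂ)
    (M : Matrix (Fin d) (Fin d) ℂ) : Matrix (Fin d) (Fin d) ℂ :=
  (a : Matrix (Fin d) (Fin d) ℂ) * M *
    ((a⁻¹ : Matrix.GeneralLinearGroup (Fin d) ℂ) : Matrix (Fin d) (Fin d) ℂ)

open scoped commutatorElement

/-- The tail products `P_i = [g_{i+1},h_{i+1}]⋯[g_n,h_n]` (so the last one is `1`). -/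
noncomputable def tailCommProd {d n : ℕ}
    (g h : Fin n → Matrix.GeneralLinearGroup (Fin d) ℂ) (i : Fin n) :
    Matrix.GeneralLinearGroup (Fin d) ℂ :=
  ((List.ofFn fun j : Fin n => ⁅g j, h j⁆).drop ((i : ℕ) + 1)).prod

/-- The derivative of `Φ_{G,n}` at `(g₁,h₁,…,gₙ,hₙ)`:
`L(X₁,Y₁,…,Xₙ,Yₙ) = Σᵢ (Xᵢ^{gᵢhᵢ⁻¹} − Xᵢ^{gᵢ} + Yᵢ^{gᵢ} − Yᵢ)^{Pᵢ⁻¹hᵢ}`. -/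
noncomputable def commutatorDerivative {d n : ℕ}
    (g h : Fin n → Matrix.GeneralLinearGroup (Fin d) ℂ)
    (X Y : Fin n → Matrix (Fin d) (Fin d) ℂ) : Matrix (Fin d) (Fin d) ℂ :=
  ∑ i : Fin n, mconj ((tailCommProd g h i)⁻¹ * h i)
    (mconj (g i * (h i)⁻¹) (X i) - mconj (g i) (X i) + mconj (g i) (Y i) - Y i)

section Aux

open Matrix

variable {d n : ℕ}

lemma mconj_zero (a : Matrix.GeneralLinearGroup (Fin d) ℂ) : mconj a (0 : Matrix (Fin d) (Fin d) ℂ) = 0 := by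
  simp [mconj]

lemma mconj_one' (M : Matrix (Fin d) (Fin d) ℂ) : mconj (1 : Matrix.GeneralLinearGroup (Fin d) ℂ) M = M := by
  simp [mconj]

lemma mconj_mul (a b : Matrix.GeneralLinearGroup (Fin d) ℂ) (M : Matrix (Fin d) (Fin d) ℂ) :
    mconj (a * b) M = mconj a (mconj b M) := by
  simp [mconj, _root_.mul_inv_rev, Units.val_mul, mul_assoc]

lemma trace_mul_mconj (a : Matrix.GeneralLinearGroup (Fin d) ℂ) (A M : Matrix (Fin d) (Fin d) ℂ) :
    trace (A * mconj a M) = trace (mconj a⁻¹ A * M) := by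
  simp only [mconj, inv_inv, ← mul_assoc]
  rw [Matrix.trace_mul_comm]
  simp only [← mul_assoc]

lemma eq_zero_of_forall_trace_mul (A : Matrix (Fin d) (Fin d) ℂ)
    (hA : ∀ M, trace (A * M) = 0) : A = 0 := by
  ext i j
  have := hA (single j i 1)
  simpa [Matrix.trace, Matrix.diag, Matrix.mul_apply, Matrix.single, ite_and] using this

lemma mconj_eq_self_iff (a : Matrix.GeneralLinearGroup (Fin d) ℂ) (Z : Matrix (Fin d) (Fin d) ℂ) :
    mconj a Z = Z ↔ Commute Z (a : Matrix (Fin d) (Fin d) ℂ) := by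
  simp only [mconj]
  rw [Units.mul_inv_eq_iff_eq_mul]
  exact eq_comm

lemma commute_units_inv_iff (a : Matrix.GeneralLinearGroup (Fin d) ℂ) (Z : Matrix (Fin d) (Fin d) ℂ) :
    Commute Z ((a⁻¹ : Matrix.GeneralLinearGroup (Fin d) ℂ) : Matrix (Fin d) (Fin d) ℂ) ↔
      Commute Z (a : Matrix (Fin d) (Fin d) ℂ) :=
  ⟨fun hc => by simpa using hc.units_inv_right, fun hc => hc.units_inv_right⟩

lemma mconj_inv_eq_self_iff (a : Matrix.GeneralLinearGroup (Fin d) ℂ) (Z : Matrix (Fin d) (Fin d) ℂ) :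
    mconj a⁻¹ Z = Z ↔ Commute Z (a : Matrix (Fin d) (Fin d) ℂ) := by
  rw [mconj_eq_self_iff, commute_units_inv_iff]

lemma mconj_mul_mconj (a : Matrix.GeneralLinearGroup (Fin d) ℂ) (A B : Matrix (Fin d) (Fin d) ℂ) :
    mconj a A * mconj a B = mconj a (A * B) := by
  simp only [mconj, mul_assoc, Units.inv_mul_cancel_left]

lemma commute_mconj_iff (a : Matrix.GeneralLinearGroup (Fin d) ℂ) (A B : Matrix (Fin d) (Fin d) ℂ) :
    Commute (mconj a A) (mconj a B) ↔ Commute A B := by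
  unfold Commute SemiconjBy
  rw [mconj_mul_mconj, mconj_mul_mconj]
  constructor
  · intro hab
    have := congrArg (mconj a⁻¹) hab
    rwa [← mconj_mul, ← mconj_mul, inv_mul_cancel, mconj_one', mconj_one'] at this
  · intro hab
    rw [hab]

/-- The key per-index computation. -/
lemma step_iff (a b : Matrix.GeneralLinearGroup (Fin d) ℂ) (W : Matrix (Fin d) (Fin d) ℂ) :
    (∀ X Y : Matrix (Fin d) (Fin d) ℂ,
        trace (W * (mconj (a * b⁻¹) X - mconj a X + mconj a Y - Y)) = 0) ↔
      Commute W (a : Matrix (Fin d) (Fin d) ℂ) ∧ Commute W (b : Matrix (Fin d) (Fin d) ℂ) := by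
  constructor
  · intro H
    have e1 : mconj a⁻¹ W = W := by
      rw [← sub_eq_zero]
      apply eq_zero_of_forall_trace_mul
      intro Y
      have h1 := H 0 Y
      rw [mconj_zero, mconj_zero] at h1
      rw [Matrix.sub_mul, trace_sub]
      have : trace (W * (mconj a Y - Y)) = 0 := by simpa using h1
      rw [Matrix.mul_sub, trace_sub, trace_mul_mconj] at this
      exact this
    have ha : Commute W (a : Matrix (Fin d) (Fin d) ℂ) := (mconj_inv_eq_self_iff a W).mp e1
    have e2 : mconj (a * b⁻¹)⁻¹ W = W := by
      rw [← sub_eq_zero]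
      have e2' : mconj (a * b⁻¹)⁻¹ W - mconj a⁻¹ W = 0 := by
        apply eq_zero_of_forall_trace_mul
        intro X
        have h2 := H X 0
        rw [mconj_zero] at h2
        have : trace (W * (mconj (a * b⁻¹) X - mconj a X)) = 0 := by simpa using h2
        rw [Matrix.mul_sub, trace_sub, trace_mul_mconj, trace_mul_mconj] at this
        rw [Matrix.sub_mul, trace_sub]
        exact this
      rw [e1] at e2'
      rw [← sub_eq_zero] at e2' ⊢
      exact e2'
    have hab : Commute W ((a * b⁻¹ : Matrix.GeneralLinearGroup (Fin d) ℂ) : Matrix (Fin d) (Fin d) ℂ) :=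
      (mconj_inv_eq_self_iff _ W).mp e2
    refine ⟨ha, ?_⟩
    have hbi : Commute W ((b⁻¹ : Matrix.GeneralLinearGroup (Fin d) ℂ) : Matrix (Fin d) (Fin d) ℂ) := by
      have h1 : Commute W (((a⁻¹ : Matrix.GeneralLinearGroup (Fin d) ℂ) : Matrix (Fin d) (Fin d) ℂ) *
          ((a * b⁻¹ : Matrix.GeneralLinearGroup (Fin d) ℂ) : Matrix (Fin d) (Fin d) ℂ)) :=
        (ha.units_inv_right).mul_right hab
      have h2 : ((a⁻¹ : Matrix.GeneralLinearGroup (Fin d) ℂ) : Matrix (Fin d) (Fin d) ℂ) *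
          ((a * b⁻¹ : Matrix.GeneralLinearGroup (Fin d) ℂ) : Matrix (Fin d) (Fin d) ℂ) =
          ((b⁻¹ : Matrix.GeneralLinearGroup (Fin d) ℂ) : Matrix (Fin d) (Fin d) ℂ) := by
        rw [← Units.val_mul, inv_mul_cancel_left]
      rwa [h2] at h1
    exact (commute_units_inv_iff b W).mp hbi
  · rintro ⟨ha, hb⟩ X Y
    have hab : Commute W ((a * b⁻¹ : Matrix.GeneralLinearGroup (Fin d) ℂ) : Matrix (Fin d) (Fin d) ℂ) := by
      have := ha.mul_right (hb.units_inv_right)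
      rwa [← Units.val_mul] at this
    rw [Matrix.mul_sub, Matrix.mul_add, Matrix.mul_sub, trace_sub, trace_add, trace_sub,
      trace_mul_mconj, trace_mul_mconj, trace_mul_mconj,
      (mconj_inv_eq_self_iff _ _).mpr hab, (mconj_inv_eq_self_iff _ _).mpr ha]
    ring

lemma commute_tailCommProd (g h : Fin n → Matrix.GeneralLinearGroup (Fin d) ℂ)
    (Z : Matrix (Fin d) (Fin d) ℂ) (i : Fin n)
    (H : ∀ j : Fin n, (i : ℕ) < (j : ℕ) →
        Commute Z ((g j : Matrix (Fin d) (Fin d) ℂ)) ∧ Commute Z ((h j : Matrix (Fin d) (Fin d) ℂ))) :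
    Commute Z ((tailCommProd g h i : Matrix.GeneralLinearGroup (Fin d) ℂ) : Matrix (Fin d) (Fin d) ℂ) := by
  unfold tailCommProd
  rw [← Units.coeHom_apply, map_list_prod]
  apply Commute.list_prod_right
  intro x hx
  rw [List.mem_map] at hx
  obtain ⟨u, hu, rfl⟩ := hx
  rw [List.mem_iff_getElem] at hu
  obtain ⟨k, hk, rfl⟩ := hu
  have hlen : k < n - ((i : ℕ) + 1) := by simpa using hk
  rw [List.getElem_drop, List.getElem_ofFn]
  set j : Fin n := ⟨(i : ℕ) + 1 + k, by omega⟩ with hj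
  have hij : (i : ℕ) < (j : ℕ) := by
    show (i : ℕ) < (i : ℕ) + 1 + k
    omega
  obtain ⟨hg, hh⟩ := H j hij
  have : Commute Z ((⁅g j, h j⁆ : Matrix.GeneralLinearGroup (Fin d) ℂ) : Matrix (Fin d) (Fin d) ℂ) := by
    rw [commutatorElement_def]
    simp only [Units.val_mul]
    exact ((hg.mul_right hh).mul_right hg.units_inv_right).mul_right hh.units_inv_right
  exact this

end Aux

/-- A matrix `Z` is trace-orthogonal to the image of the derivative of `Φ_{G,n}` at
`(g₁,h₁,…,gₙ,hₙ)` if and only if `Z` commutes with all `gᵢ` and `hᵢ`. -/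
theorem trace_orthogonal_commutatorDerivative_iff (d n : ℕ) (hd : 1 ≤ d) (hn : 1 ≤ n)
    (g h : Fin n → Matrix.GeneralLinearGroup (Fin d) ℂ)
    (Z : Matrix (Fin d) (Fin d) ℂ) :
    (∀ X Y : Fin n → Matrix (Fin d) (Fin d) ℂ,
        Matrix.trace (Z * commutatorDerivative g h X Y) = 0) ↔
      ∀ i : Fin n, Commute Z ((g i : Matrix (Fin d) (Fin d) ℂ)) ∧
        Commute Z ((h i : Matrix (Fin d) (Fin d) ℂ)) := by
  constructor
  · intro H
    have key : ∀ i : Fin n,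
        Commute (mconj ((tailCommProd g h i)⁻¹ * h i)⁻¹ Z) ((g i : Matrix (Fin d) (Fin d) ℂ)) ∧
        Commute (mconj ((tailCommProd g h i)⁻¹ * h i)⁻¹ Z) ((h i : Matrix (Fin d) (Fin d) ℂ)) := by
      intro i
      apply (step_iff (g i) (h i) _).mp
      intro X0 Y0
      have hH := H (Pi.single i X0) (Pi.single i Y0)
      unfold commutatorDerivative at hH
      rw [Finset.mul_sum, Matrix.trace_sum,
        Fintype.sum_eq_single i (fun j hj => by
          simp [Pi.single_eq_of_ne hj, mconj_zero])] at hH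
      rw [Pi.single_eq_same, Pi.single_eq_same, trace_mul_mconj] at hH
      exact hH
    have stepi : ∀ i : Fin n,
        (∀ j : Fin n, (i : ℕ) < (j : ℕ) →
          Commute Z ((g j : Matrix (Fin d) (Fin d) ℂ)) ∧ Commute Z ((h j : Matrix (Fin d) (Fin d) ℂ))) →
        Commute Z ((g i : Matrix (Fin d) (Fin d) ℂ)) ∧ Commute Z ((h i : Matrix (Fin d) (Fin d) ℂ)) := by
      intro i hlater
      have hP := commute_tailCommProd g h Z i hlater
      have hW : mconj ((tailCommProd g h i)⁻¹ * h i)⁻¹ Z = mconj (h i)⁻¹ Z := by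
        rw [_root_.mul_inv_rev, inv_inv, mconj_mul, (mconj_eq_self_iff _ _).mpr hP]
      obtain ⟨kg, kh⟩ := key i
      rw [hW] at kg kh
      have hh : Commute Z ((h i : Matrix (Fin d) (Fin d) ℂ)) := by
        have : Commute (mconj (h i)⁻¹ Z) (mconj (h i)⁻¹ ((h i : Matrix (Fin d) (Fin d) ℂ))) := by
          rwa [show mconj (h i)⁻¹ ((h i : Matrix (Fin d) (Fin d) ℂ)) = ((h i : Matrix (Fin d) (Fin d) ℂ)) from by
            simp only [mconj, inv_inv]
            rw [Units.inv_mul, one_mul]]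
        exact (commute_mconj_iff _ _ _).mp this
      refine ⟨?_, hh⟩
      rwa [(mconj_inv_eq_self_iff _ _).mpr hh] at kg
    have main : ∀ k : ℕ, ∀ i : Fin n, n ≤ (i : ℕ) + 1 + k →
        Commute Z ((g i : Matrix (Fin d) (Fin d) ℂ)) ∧ Commute Z ((h i : Matrix (Fin d) (Fin d) ℂ)) := by
      intro k
      induction k with
      | zero =>
        intro i hi
        exact stepi i (fun j hj => absurd j.isLt (by omega))
      | succ k ih =>
        intro i hi
        exact stepi i (fun j hj => ih j (by omega))
    intro i
    exact main n i (by omega)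
  · intro K X Y
    unfold commutatorDerivative
    rw [Finset.mul_sum, Matrix.trace_sum]
    apply Finset.sum_eq_zero
    intro i _
    have hP := commute_tailCommProd g h Z i (fun j _ => K j)
    have hai : Commute Z (((tailCommProd g h i)⁻¹ * h i : Matrix.GeneralLinearGroup (Fin d) ℂ) :
        Matrix (Fin d) (Fin d) ℂ) := by
      have := (hP.units_inv_right).mul_right (K i).2
      rwa [← Units.val_mul] at this
    rw [trace_mul_mconj, (mconj_inv_eq_self_iff _ _).mpr hai]
    exact (step_iff (g i) (h i) Z).mpr ⟨(K i).1, (K i).2⟩ (X i) (Y i)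
end

section
/- Let d ≥ 2 be an integer, let L = {1, …, d}, and let I = L×L ∖ {(d,d)}. Let Γ₃ be the simple graph on vertex set I in which two distinct vertices are adjacent iff they can be written (in some order) as (i,j) and (j,l) with j = ⌈(i+l)/2⌉ + δ_{i,l}, where δ_{i,l} = 1 if i = l and 0 otherwise. For an integer t with −d < t < d let I_t = {(i,j) ∈ I : i − j = t}. For −d < l < d define the subgraph Δ_l of Γ₃ as follows: for l < 0, Δ_l has vertex set I_l ∪ I_{l+1} and its edges are the edges of Γ₃ with both endpoints in I_l or with one endpoint in I_l and one in I_{l+1}; for l > 0, Δ_l has vertex set I_l ∪ I_{l−1} and its edges are the edges of Γ₃ with both endpoints in I_l or with one endpoint in I_l and one in I_{l−1}; for l = 0, Δ_0 has vertex set I_1 ∪ I_{−1} and its edges are the edges of Γ₃ with one endpoint in I_1 and one in I_{−1}. Then for every l with −d < l < d, the graph Δ_l is a forest (contains no cycles) and every vertex of Δ_l has degree at most 3. -/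
/-- The vertex set `I = L×L ∖ {(d,d)}`, where `L = {1,…,d}`. -/
def slVertexSet (d : ℤ) : Set (ℤ × ℤ) :=
  {v | 1 ≤ v.1 ∧ v.1 ≤ d ∧ 1 ≤ v.2 ∧ v.2 ≤ d ∧ v ≠ (d, d)}

/-- The diagonal `I_t = {(i,j) ∈ I : i − j = t}`. -/
def slDiagSet (d t : ℤ) : Set (ℤ × ℤ) :=
  {v | v ∈ slVertexSet d ∧ v.1 - v.2 = t}

/-- The base relation of the graph `Γ₃`: `u = (i,j)`, `v = (j,l)` with
`j = ⌈(i+l)/2⌉ + δ_{i,l}`, both vertices lying in `I`. -/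
def slGammaRel (d : ℤ) (u v : ℤ × ℤ) : Prop :=
  u ∈ slVertexSet d ∧ v ∈ slVertexSet d ∧
    ∃ i j l : ℤ, u = (i, j) ∧ v = (j, l) ∧
      j = ⌈(((i + l : ℤ) : ℚ)) / 2⌉ + (if i = l then 1 else 0)

/-- The graph `Γ₃` on `I`: two distinct vertices are adjacent iff, in some order, they can
be written as `(i,j)` and `(j,l)` with `j = ⌈(i+l)/2⌉ + δ_{i,l}`. -/
def slGammaGraph (d : ℤ) : SimpleGraph (ℤ × ℤ) :=
  SimpleGraph.fromRel (slGammaRel d)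

/-- The endpoint condition defining the edges of the subgraph `Δ_l` of `Γ₃`:
for `l < 0`, both endpoints in `I_l`, or one in `I_l` and one in `I_{l+1}`;
for `l > 0`, both endpoints in `I_l`, or one in `I_l` and one in `I_{l−1}`;
for `l = 0`, one endpoint in `I_1` and one in `I_{−1}`. -/
def slDeltaCond (d l : ℤ) (u v : ℤ × ℤ) : Prop :=
  if l < 0 then
    (u ∈ slDiagSet d l ∧ v ∈ slDiagSet d l) ∨
      (u ∈ slDiagSet d l ∧ v ∈ slDiagSet d (l + 1))
  else if 0 < l then
    (u ∈ slDiagSet d l ∧ v ∈ slDiagSet d l) ∨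
      (u ∈ slDiagSet d l ∧ v ∈ slDiagSet d (l - 1))
  else (u ∈ slDiagSet d 1 ∧ v ∈ slDiagSet d (-1))

/-- The subgraph `Δ_l` of `Γ₃`: its edges are the edges of `Γ₃` whose endpoints satisfy,
in some order, the condition `slDeltaCond d l`. -/
def slDeltaGraph (d l : ℤ) : SimpleGraph (ℤ × ℤ) :=
  SimpleGraph.fromRel (fun u v => (slGammaGraph d).Adj u v ∧ slDeltaCond d l u v)

/-- Generic acyclicity criterion: if along every edge the measure `f` changes, and every
vertex has at most one neighbour of strictly larger measure (namely `p v`), then the graph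
is acyclic. -/
lemma acyclic_of_measure {V : Type*} {G : SimpleGraph V} (f : V → ℤ) (p : V → V)
    (hne : ∀ v w, G.Adj v w → f v ≠ f w)
    (hpar : ∀ v w, G.Adj v w → f v < f w → w = p v) : G.IsAcyclic := by
  classical
  intro v c hc
  obtain ⟨m, hm, hmin⟩ : ∃ m ∈ c.support.toFinset, ∀ x ∈ c.support.toFinset, f m ≤ f x :=
    Finset.exists_min_image _ f ⟨v, by simp⟩
  rw [List.mem_toFinset] at hm
  have hmin' : ∀ x ∈ c.support, f m ≤ f x := fun x hx => hmin x (List.mem_toFinset.2 hx)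
  set c' := c.rotate m hm with hc'def
  have hc' : c'.IsCycle := hc.rotate hm
  have hsupp : ∀ x ∈ c'.support, f m ≤ f x := by
    intro x hx
    rw [c'.support_eq_cons] at hx
    rcases List.mem_cons.1 hx with rfl | hx
    · exact le_refl _
    · exact hmin' x (List.tail_subset _ ((c.support_rotate m hm).mem_iff.1 hx))
  have h3 : 3 ≤ c'.length := hc'.three_le_length
  have hnn : ¬ c'.Nil := hc'.not_nil
  obtain ⟨b, hadj, q, hq⟩ := SimpleGraph.Walk.not_nil_iff.1 hnn
  have hqlen : 2 ≤ q.length := by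
    rw [hq, SimpleGraph.Walk.length_cons] at h3; omega
  have hqrevnn : ¬ q.reverse.Nil := by
    rw [SimpleGraph.Walk.not_nil_iff_lt_length, SimpleGraph.Walk.length_reverse]; omega
  obtain ⟨b2, hadj2, q2, hq2⟩ := SimpleGraph.Walk.not_nil_iff.1 hqrevnn
  have hb : b ∈ c'.support := by
    rw [hq, SimpleGraph.Walk.support_cons]
    exact List.mem_cons_of_mem _ q.start_mem_support
  have hb2q : b2 ∈ q.support := by
    have h1 : b2 ∈ q.reverse.support := by
      rw [hq2, SimpleGraph.Walk.support_cons]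
      exact List.mem_cons_of_mem _ q2.start_mem_support
    rwa [SimpleGraph.Walk.support_reverse, List.mem_reverse] at h1
  have hb2 : b2 ∈ c'.support := by
    rw [hq, SimpleGraph.Walk.support_cons]
    exact List.mem_cons_of_mem _ hb2q
  have hfb : f m < f b := lt_of_le_of_ne (hsupp b hb) (hne m b hadj)
  have hfb2 : f m < f b2 := lt_of_le_of_ne (hsupp b2 hb2) (hne m b2 hadj2)
  have hbp : b = p m := hpar m b hadj hfb
  have hb2p : b2 = p m := hpar m b2 hadj2 hfb2
  have hedge : s(m, b2) ∈ q.edges := by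
    have h1 : s(m, b2) ∈ q.reverse.edges := by
      rw [hq2, SimpleGraph.Walk.edges_cons]
      exact List.mem_cons_self
    rwa [SimpleGraph.Walk.edges_reverse, List.mem_reverse] at h1
  have hnodup : (s(m, b) :: q.edges).Nodup := by
    have h1 := hc'.edges_nodup
    rwa [hq, SimpleGraph.Walk.edges_cons] at h1
  have hbb2 : b = b2 := hbp.trans hb2p.symm
  rw [← hbb2] at hedge
  exact (List.nodup_cons.1 hnodup).1 hedge

lemma ceil_half_cases (n j : ℤ) (h : j = ⌈((n : ℚ)) / 2⌉) : n = 2 * j ∨ n = 2 * j - 1 := by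
  have h1 : ((n : ℚ)) / 2 ≤ (⌈((n : ℚ)) / 2⌉ : ℚ) := Int.le_ceil _
  have h2 : (⌈((n : ℚ)) / 2⌉ : ℚ) < (n : ℚ) / 2 + 1 := Int.ceil_lt_add_one _
  rw [← h] at h1 h2
  have hA : (n : ℚ) ≤ 2 * (j : ℚ) := by linarith
  have hB : 2 * (j : ℚ) < (n : ℚ) + 2 := by linarith
  have hA' : n ≤ 2 * j := by exact_mod_cast hA
  have hB' : 2 * j < n + 2 := by exact_mod_cast hB
  omega

lemma slGammaRel_linear {d : ℤ} {u v : ℤ × ℤ} (h : slGammaRel d u v) :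
    u ∈ slVertexSet d ∧ v ∈ slVertexSet d ∧ v.1 = u.2 ∧
      ((u.1 = v.2 ∧ u.2 = u.1 + 1) ∨
        (u.1 ≠ v.2 ∧ (u.1 + v.2 = 2 * u.2 ∨ u.1 + v.2 = 2 * u.2 - 1))) := by
  obtain ⟨hu, hv, i, j, l, rfl, rfl, hj⟩ := h
  refine ⟨hu, hv, rfl, ?_⟩
  by_cases hil : i = l
  · left
    subst hil
    rw [if_pos rfl] at hj
    have hc : ⌈(((i + i : ℤ)) : ℚ) / 2⌉ = i := by
      have he : (((i + i : ℤ)) : ℚ) / 2 = (i : ℚ) := by push_cast; ring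
      rw [he, Int.ceil_intCast]
    rw [hc] at hj
    exact ⟨rfl, hj⟩
  · right
    rw [if_neg hil, add_zero] at hj
    exact ⟨hil, ceil_half_cases (i + l) j hj⟩

lemma slDelta_adj_char {d t : ℤ} {v w : ℤ × ℤ} (h : (slDeltaGraph d t).Adj v w) :
    v ∈ slVertexSet d ∧ w ∈ slVertexSet d ∧
      (if t < 0 then
        (v.1 - v.2 = t ∧ (w = (v.2, v.2 - t) ∨ w = (v.2, v.2 - t - 1))) ∨
          (w.1 - w.2 = t ∧ (v = (w.2, w.2 - t) ∨ v = (w.2, w.2 - t - 1)))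
      else if 0 < t then
        (v.1 - v.2 = t ∧ (w = (v.2, v.2 - t) ∨ w = (v.1 + t - 1, v.1))) ∨
          (w.1 - w.2 = t ∧ (v = (w.2, w.2 - t) ∨ v = (w.1 + t - 1, w.1)))
      else w = (v.2, v.1)) := by
  rw [slDeltaGraph, SimpleGraph.fromRel_adj] at h
  obtain ⟨hvw, h⟩ := h
  have hγ : slGammaRel d v w ∨ slGammaRel d w v := by
    rcases h with ⟨hg, -⟩ | ⟨hg, -⟩ <;>
      (rw [slGammaGraph, SimpleGraph.fromRel_adj] at hg; tauto)
  have hcond : slDeltaCond d t v w ∨ slDeltaCond d t w v := by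
    rcases h with ⟨-, hc⟩ | ⟨-, hc⟩
    · exact Or.inl hc
    · exact Or.inr hc
  have hlin : (v ∈ slVertexSet d ∧ w ∈ slVertexSet d) ∧
      ((w.1 = v.2 ∧ ((v.1 = w.2 ∧ v.2 = v.1 + 1) ∨
          (v.1 ≠ w.2 ∧ (v.1 + w.2 = 2 * v.2 ∨ v.1 + w.2 = 2 * v.2 - 1)))) ∨
       (v.1 = w.2 ∧ ((w.1 = v.2 ∧ w.2 = w.1 + 1) ∨
          (w.1 ≠ v.2 ∧ (w.1 + v.2 = 2 * w.2 ∨ w.1 + v.2 = 2 * w.2 - 1))))) := by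
    rcases hγ with hg | hg
    · obtain ⟨h1, h2, h3, h4⟩ := slGammaRel_linear hg
      exact ⟨⟨h1, h2⟩, Or.inl ⟨h3, h4⟩⟩
    · obtain ⟨h1, h2, h3, h4⟩ := slGammaRel_linear hg
      exact ⟨⟨h2, h1⟩, Or.inr ⟨h3, h4⟩⟩
  obtain ⟨⟨hv, hw⟩, hlin⟩ := hlin
  refine ⟨hv, hw, ?_⟩
  clear hγ hv hw
  obtain ⟨a, b⟩ := v
  obtain ⟨c, e⟩ := w
  simp only [ne_eq, Prod.mk.injEq] at hlin ⊢
  rcases lt_trichotomy t 0 with ht | ht | ht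
  · have hcond' : (a - b = t ∧ c - e = t) ∨ (a - b = t ∧ c - e = t + 1) ∨
        (c - e = t ∧ a - b = t) ∨ (c - e = t ∧ a - b = t + 1) := by
      simp only [slDeltaCond, slDiagSet, Set.mem_setOf_eq, if_pos ht] at hcond
      rcases hcond with (⟨h1, h2⟩ | ⟨h1, h2⟩) | (⟨h1, h2⟩ | ⟨h1, h2⟩)
      · exact Or.inl ⟨h1.2, h2.2⟩
      · exact Or.inr (Or.inl ⟨h1.2, h2.2⟩)
      · exact Or.inr (Or.inr (Or.inl ⟨h1.2, h2.2⟩))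
      · exact Or.inr (Or.inr (Or.inr ⟨h1.2, h2.2⟩))
    clear h hcond hvw
    simp only [if_pos ht]
    rcases hcond' with ⟨h1, h2⟩ | ⟨h1, h2⟩ | ⟨h1, h2⟩ | ⟨h1, h2⟩ <;>
      rcases hlin with ⟨h3, ⟨h4, h5⟩ | ⟨h4, h6 | h6⟩⟩ | ⟨h3, ⟨h4, h5⟩ | ⟨h4, h6 | h6⟩⟩ <;>
      omega
  · subst ht
    have hcond' : (a - b = 1 ∧ c - e = -1) ∨ (c - e = 1 ∧ a - b = -1) := by
      simp only [slDeltaCond, slDiagSet, Set.mem_setOf_eq,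
        if_neg (lt_irrefl (0 : ℤ))] at hcond
      rcases hcond with ⟨h1, h2⟩ | ⟨h1, h2⟩
      · exact Or.inl ⟨h1.2, h2.2⟩
      · exact Or.inr ⟨h1.2, h2.2⟩
    clear h hcond hvw
    simp only [if_neg (lt_irrefl (0 : ℤ))]
    rcases hcond' with ⟨h1, h2⟩ | ⟨h1, h2⟩ <;>
      rcases hlin with ⟨h3, ⟨h4, h5⟩ | ⟨h4, h6 | h6⟩⟩ | ⟨h3, ⟨h4, h5⟩ | ⟨h4, h6 | h6⟩⟩ <;>
      omega
  · have hcond' : (a - b = t ∧ c - e = t) ∨ (a - b = t ∧ c - e = t - 1) ∨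
        (c - e = t ∧ a - b = t) ∨ (c - e = t ∧ a - b = t - 1) := by
      simp only [slDeltaCond, slDiagSet, Set.mem_setOf_eq, if_neg (by omega : ¬ t < 0),
        if_pos ht] at hcond
      rcases hcond with (⟨h1, h2⟩ | ⟨h1, h2⟩) | (⟨h1, h2⟩ | ⟨h1, h2⟩)
      · exact Or.inl ⟨h1.2, h2.2⟩
      · exact Or.inr (Or.inl ⟨h1.2, h2.2⟩)
      · exact Or.inr (Or.inr (Or.inl ⟨h1.2, h2.2⟩))
      · exact Or.inr (Or.inr (Or.inr ⟨h1.2, h2.2⟩))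
    clear h hcond hvw
    simp only [if_neg (by omega : ¬ t < 0), if_pos ht]
    rcases hcond' with ⟨h1, h2⟩ | ⟨h1, h2⟩ | ⟨h1, h2⟩ | ⟨h1, h2⟩ <;>
      rcases hlin with ⟨h3, ⟨h4, h5⟩ | ⟨h4, h6 | h6⟩⟩ | ⟨h3, ⟨h4, h5⟩ | ⟨h4, h6 | h6⟩⟩ <;>
      omega

def slF (t : ℤ) (v : ℤ × ℤ) : ℤ :=
  if t < 0 then (if v.1 - v.2 = t then 2 * v.1 else 0)
  else if 0 < t then (if v.1 - v.2 = t then -2 * v.1 else -2 * v.1 - 1)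
  else v.2 - v.1

def slP (t : ℤ) (v : ℤ × ℤ) : ℤ × ℤ :=
  if t < 0 then (if v.1 - v.2 = t then (v.2, v.2 - t) else (v.1 + t, v.1))
  else if 0 < t then (v.2, v.2 - t)
  else (v.2, v.1)

lemma slF_ne {d t : ℤ} {v w : ℤ × ℤ} (h : (slDeltaGraph d t).Adj v w) :
    slF t v ≠ slF t w := by
  have hvw := h.ne
  obtain ⟨hv, hw, hchar⟩ := slDelta_adj_char h
  obtain ⟨a, b⟩ := v
  obtain ⟨c, e⟩ := w
  simp only [slVertexSet, Set.mem_setOf_eq, ne_eq, Prod.mk.injEq] at hv hw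
  simp only [Prod.mk.injEq, ne_eq] at hchar hvw
  simp only [slF, ne_eq]
  split_ifs at hchar ⊢ <;> omega

lemma slP_spec {d t : ℤ} {v w : ℤ × ℤ} (h : (slDeltaGraph d t).Adj v w)
    (hlt : slF t v < slF t w) : w = slP t v := by
  obtain ⟨hv, hw, hchar⟩ := slDelta_adj_char h
  obtain ⟨a, b⟩ := v
  obtain ⟨c, e⟩ := w
  simp only [slVertexSet, Set.mem_setOf_eq, ne_eq, Prod.mk.injEq] at hv hw
  simp only [Prod.mk.injEq, ne_eq] at hchar
  simp only [slF] at hlt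
  simp only [slP]
  split_ifs at hchar hlt ⊢ <;> simp only [Prod.mk.injEq] <;> omega

/-- For every `l` with `−d < l < d`, the graph `Δ_l` is a forest and every vertex has
degree at most `3`. -/
theorem slDeltaGraph_acyclic_degree_le_three (d : ℤ) (hd : 2 ≤ d) (l : ℤ)
    (hl1 : -d < l) (hl2 : l < d) :
    (slDeltaGraph d l).IsAcyclic ∧
      ∀ v : ℤ × ℤ, {w | (slDeltaGraph d l).Adj v w}.Finite ∧
        {w | (slDeltaGraph d l).Adj v w}.ncard ≤ 3 := by
  constructor
  · exact acyclic_of_measure (slF l) (slP l) (fun v w h => slF_ne h)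
      (fun v w h hlt => slP_spec h hlt)
  · intro v
    rcases lt_trichotomy l 0 with hl | hl | hl
    · have hsub : {w | (slDeltaGraph d l).Adj v w} ⊆
          insert (v.2, v.2 - l) (insert (v.2, v.2 - l - 1) {((v.1 + l, v.1) : ℤ × ℤ)}) := by
        intro w hw
        obtain ⟨-, -, hchar⟩ := slDelta_adj_char hw
        rw [if_pos hl] at hchar
        simp only [Set.mem_insert_iff, Set.mem_singleton_iff]
        rcases hchar with ⟨h1, h2 | h2⟩ | ⟨h1, h2 | h2⟩
        · exact Or.inl h2
        · exact Or.inr (Or.inl h2)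
        · refine Or.inr (Or.inr ?_)
          simp only [Prod.ext_iff] at h2 ⊢
          omega
        · refine Or.inr (Or.inr ?_)
          simp only [Prod.ext_iff] at h2 ⊢
          omega
      have hfin : (insert (v.2, v.2 - l)
          (insert (v.2, v.2 - l - 1) {((v.1 + l, v.1) : ℤ × ℤ)}) : Set (ℤ × ℤ)).Finite :=
        (Set.finite_singleton _).insert _ |>.insert _
      refine ⟨hfin.subset hsub, le_trans (Set.ncard_le_ncard hsub hfin) ?_⟩
      refine le_trans (Set.ncard_insert_le _ _) ?_
      have := Set.ncard_insert_le (v.2, v.2 - l - 1) {((v.1 + l, v.1) : ℤ × ℤ)}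
      simp only [Set.ncard_singleton] at this ⊢
      omega
    · subst hl
      have hsub : {w | (slDeltaGraph d 0).Adj v w} ⊆ {((v.2, v.1) : ℤ × ℤ)} := by
        intro w hw
        obtain ⟨-, -, hchar⟩ := slDelta_adj_char hw
        rw [if_neg (lt_irrefl 0), if_neg (lt_irrefl 0)] at hchar
        exact hchar
      have hfin : ({((v.2, v.1) : ℤ × ℤ)} : Set (ℤ × ℤ)).Finite := Set.finite_singleton _
      refine ⟨hfin.subset hsub, le_trans (Set.ncard_le_ncard hsub hfin) ?_⟩
      simp [Set.ncard_singleton]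
    · have hsub : {w | (slDeltaGraph d l).Adj v w} ⊆
          insert (v.2, v.2 - l) (insert (v.1 + l - 1, v.1) {((v.1 + l, v.1) : ℤ × ℤ)}) := by
        intro w hw
        obtain ⟨-, -, hchar⟩ := slDelta_adj_char hw
        rw [if_neg (by omega : ¬ l < 0), if_pos hl] at hchar
        simp only [Set.mem_insert_iff, Set.mem_singleton_iff]
        rcases hchar with ⟨h1, h2 | h2⟩ | ⟨h1, h2 | h2⟩
        · exact Or.inl h2
        · exact Or.inr (Or.inl h2)
        · refine Or.inr (Or.inr ?_)
          simp only [Prod.ext_iff] at h2 ⊢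
          omega
        · refine Or.inl ?_
          simp only [Prod.ext_iff] at h2 ⊢
          omega
      have hfin : (insert (v.2, v.2 - l)
          (insert (v.1 + l - 1, v.1) {((v.1 + l, v.1) : ℤ × ℤ)}) : Set (ℤ × ℤ)).Finite :=
        (Set.finite_singleton _).insert _ |>.insert _
      refine ⟨hfin.subset hsub, le_trans (Set.ncard_le_ncard hsub hfin) ?_⟩
      refine le_trans (Set.ncard_insert_le _ _) ?_
      have := Set.ncard_insert_le (v.1 + l - 1, v.1) {((v.1 + l, v.1) : ℤ × ℤ)}
      simp only [Set.ncard_singleton] at this ⊢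
      omega
end
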